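/- arXiv:2505.08539 — 5 statements merged into one kernel-verified Lean document; each statement's English description precedes it below -/
import Mathlib

section
/- Let C_n^σ be an unbalanced signed cycle on n vertices. Then i₋(C_n^σ) = ⌈n/2⌉ − 1 if n ≡ 2 or 3 (mod 4), and i₋(C_n^σ) = ⌈n/2⌉ if n ≡ 0 or 1 (mod 4). -/
open Matrix

/-- A signed graph: a simple graph together with a `±1` sign on each edge. -/
structure SignedGraph (V : Type*) where
  G : SimpleGraph V
  sign : V → V → ℝ
  sign_symm : ∀ u v, sign u v = sign v u
  sign_pm : ∀ u v, G.Adj u v → sign u v = 1 ∨ sign u v = -1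

namespace SignedGraph

variable {V : Type*} [Fintype V] [DecidableEq V]

open scoped Classical

/-- The (signed) adjacency matrix of a signed graph. -/
noncomputable def adjMatrix (Γ : SignedGraph V) : Matrix V V ℝ :=
  fun u v => if Γ.G.Adj u v then Γ.sign u v else 0

lemma isHermitian (Γ : SignedGraph V) : Γ.adjMatrix.IsHermitian := by
  classical
  ext u v
  simp only [adjMatrix, Matrix.conjTranspose_apply, star_trivial]
  by_cases h : Γ.G.Adj v u
  · simp [h, h.symm, Γ.sign_symm v u]
  · have h' : ¬ Γ.G.Adj u v := fun hh => h hh.symm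
    simp [h, h']

/-- number of positive eigenvalues (with multiplicity). -/
noncomputable def posInertia (Γ : SignedGraph V) : ℕ :=
  (Finset.univ.filter fun i => 0 < Γ.isHermitian.eigenvalues i).card

/-- number of negative eigenvalues (with multiplicity). -/
noncomputable def negInertia (Γ : SignedGraph V) : ℕ :=
  (Finset.univ.filter fun i => Γ.isHermitian.eigenvalues i < 0).card

/-- multiplicity of the eigenvalue zero. -/
noncomputable def nullity (Γ : SignedGraph V) : ℕ :=
  (Finset.univ.filter fun i => Γ.isHermitian.eigenvalues i = 0).card

/-- The sign of an (unordered) edge. -/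
def edgeSign (Γ : SignedGraph V) : Sym2 V → ℝ :=
  Sym2.lift ⟨Γ.sign, Γ.sign_symm⟩

/-- A signed graph is balanced if every cycle has positive sign. -/
def Balanced (Γ : SignedGraph V) : Prop :=
  ∀ (v : V) (w : Γ.G.Walk v v), w.IsCycle → (w.edges.map Γ.edgeSign).prod = 1

/-- Switching equivalence of two signed graphs on the same vertex set. -/
def SwitchingEquiv (Γ₁ Γ₂ : SignedGraph V) : Prop :=
  Γ₁.G = Γ₂.G ∧ ∃ θ : V → ℝ, (∀ v, θ v = 1 ∨ θ v = -1) ∧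
    ∀ u v, Γ₁.G.Adj u v → Γ₂.sign u v = θ u * Γ₁.sign u v * θ v

/-- The induced signed subgraph on a finite set of vertices. -/
noncomputable def inducedOn (Γ : SignedGraph V) (s : Finset V) :
    SignedGraph {x // x ∈ s} where
  G := { Adj := fun a b => Γ.G.Adj a b
         symm := ⟨fun a b h => Γ.G.adj_symm h⟩
         loopless := ⟨fun a h => Γ.G.irrefl h⟩ }
  sign := fun a b => Γ.sign a b
  sign_symm := fun a b => Γ.sign_symm a b
  sign_pm := fun a b h => Γ.sign_pm a b h

end SignedGraph



section Helpers

open Matrix Polynomial Real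


lemma my_charpoly_conj {m K : Type*} [Fintype m] [DecidableEq m] [CommRing K]
    (P Q A : Matrix m m K) (h1 : P * Q = 1) :
    (P * A * Q).charpoly = A.charpoly := by
  have hd : (diagonal fun _ : m => (X : K[X])) = (X : K[X]) • (1 : Matrix m m K[X]) := by
    rw [Matrix.smul_one_eq_diagonal]
  have hscal : P.map C * (Matrix.scalar m (X : K[X])) * Q.map C = Matrix.scalar m (X : K[X]) := by
    rw [scalar_apply, hd, mul_smul_comm, mul_one, smul_mul_assoc, ← Matrix.map_mul, h1,
      Matrix.map_one _ (map_zero C) (map_one C)]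
  have key : charmatrix (P * A * Q) = P.map C * charmatrix A * Q.map C := by
    rw [charmatrix, charmatrix, RingHom.mapMatrix_apply, RingHom.mapMatrix_apply,
      Matrix.map_mul, Matrix.map_mul, mul_sub, sub_mul, hscal]
  have hdet : det (P.map C) * det (Q.map C) = 1 := by
    rw [← det_mul, ← Matrix.map_mul, h1, Matrix.map_one _ (map_zero C) (map_one C), det_one]
  rw [Matrix.charpoly, Matrix.charpoly, key, det_mul, det_mul]
  calc det (P.map C) * det (charmatrix A) * det (Q.map C)
      = det (charmatrix A) * (det (P.map C) * det (Q.map C)) := by ring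
    _ = det (charmatrix A) := by rw [hdet, mul_one]

lemma my_charpoly_diagonal {m K : Type*} [Fintype m] [DecidableEq m] [CommRing K] (d : m → K) :
    (Matrix.diagonal d).charpoly = ∏ i, (X - C (d i)) := by
  have : charmatrix (diagonal d) = diagonal (fun i => (X : K[X]) - C (d i)) := by
    rw [charmatrix, RingHom.mapMatrix_apply, diagonal_map (map_zero C), scalar_apply, diagonal_sub]
  rw [Matrix.charpoly, this, det_diagonal]

lemma my_multiset_eq_of_prod {m : Type*} [Fintype m] (f g : m → ℂ)
    (h : ∏ i, (X - C (f i)) = ∏ i, (X - C (g i))) :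
    Finset.univ.val.map f = Finset.univ.val.map g := by
  have hf := Polynomial.roots_multiset_prod_X_sub_C (Finset.univ.val.map f)
  have hg := Polynomial.roots_multiset_prod_X_sub_C (Finset.univ.val.map g)
  rw [Multiset.map_map] at hf hg
  rw [← hf, ← hg]
  congr 1


lemma my_count (n : ℕ) (hn : 3 ≤ n) :
    ((Finset.univ : Finset (Fin n)).filter
      (fun k => n < 2*(2*k.val+1) ∧ 2*(2*k.val+1) < 3*n)).card = (3*n+1)/4 - (n+2)/4 := by
  rw [Finset.card_filter,
    Fin.sum_univ_eq_sum_range (fun k => if n < 2*(2*k+1) ∧ 2*(2*k+1) < 3*n then 1 else 0),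
    ← Finset.card_filter]
  have : (Finset.range n).filter (fun k => n < 2*(2*k+1) ∧ 2*(2*k+1) < 3*n)
      = Finset.Ico ((n+2)/4) ((3*n+1)/4) := by
    ext k; simp only [Finset.mem_filter, Finset.mem_range, Finset.mem_Ico]; omega
  rw [this, Nat.card_Ico]

lemma my_cos_neg_iff (n k : ℕ) (hn : 3 ≤ n) (hk : k < n) :
    (2 * Real.cos (((2*k+1 : ℕ) : ℝ) * π / n) < 0) ↔ (n < 2*(2*k+1) ∧ 2*(2*k+1) < 3*n) := by
  have hπ := Real.pi_pos
  have hn0 : (0:ℝ) < n := by positivity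
  set m : ℝ := ((2*k+1 : ℕ) : ℝ) with hm
  have hm1 : (1:ℝ) ≤ m := by rw [hm]; exact_mod_cast Nat.one_le_iff_ne_zero.mpr (by omega)
  have hmlt : m < 2*n := by rw [hm]; exact_mod_cast (show 2*k+1 < 2*n by omega)
  set θ := m * π / n with hθ
  have hθpos : 0 < θ := by rw [hθ]; positivity
  have hθlt : θ < 2 * π := by
    rw [hθ, div_lt_iff₀ hn0]
    nlinarith
  have h1 : (π/2 < θ) ↔ ((n:ℝ) < 2*m) := by
    rw [hθ, div_lt_div_iff₀ two_pos hn0]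
    constructor <;> intro <;> nlinarith
  have h2 : (θ < 3*π/2) ↔ (2*m < 3*(n:ℝ)) := by
    rw [hθ, div_lt_div_iff₀ hn0 two_pos]
    constructor <;> intro <;> nlinarith
  have key : Real.cos θ < 0 ↔ (π/2 < θ ∧ θ < 3*π/2) := by
    constructor
    · intro hneg
      by_contra hcon
      rw [not_and_or, not_lt, not_lt] at hcon
      rcases hcon with hc | hc
      · have : 0 ≤ Real.cos θ := Real.cos_nonneg_of_mem_Icc ⟨by linarith, hc⟩
        linarith
      · have hcos : Real.cos (θ - 2*π) = Real.cos θ := Real.cos_sub_two_pi θ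
        have : 0 ≤ Real.cos (θ - 2*π) :=
          Real.cos_nonneg_of_mem_Icc ⟨by linarith, by linarith⟩
        linarith [hcos]
    · rintro ⟨ha, hb⟩
      exact Real.cos_neg_of_pi_div_two_lt_of_lt ha (by linarith)
  constructor
  · intro hneg
    have := key.mp (by linarith)
    constructor
    · have := h1.mp this.1
      rw [hm] at this; exact_mod_cast this
    · have := h2.mp this.2
      rw [hm] at this; exact_mod_cast this
  · rintro ⟨ha, hb⟩
    have hcos := key.mpr ⟨h1.mpr (by rw [hm]; exact_mod_cast ha),
      h2.mpr (by rw [hm]; exact_mod_cast hb)⟩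
    linarith


noncomputable def cc (n : ℕ) : Fin n → ℝ := fun u => if u.val = n - 1 then -1 else 1

noncomputable def Bmat (n : ℕ) [NeZero n] : Matrix (Fin n) (Fin n) ℝ :=
  Matrix.of fun u v => (if v = u + 1 then cc n u else 0) + (if u = v + 1 then cc n v else 0)

noncomputable def om (n : ℕ) : ℂ := Complex.exp (Real.pi * Complex.I / n)

noncomputable def mu (n : ℕ) : Fin n → ℂ := fun k => om n ^ (2 * k.val + 1)

noncomputable def lamC (n : ℕ) : Fin n → ℂ := fun k => mu n k + (mu n k)⁻¹

noncomputable def Umat (n : ℕ) : Matrix (Fin n) (Fin n) ℂ :=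
  Matrix.of fun j k => mu n k ^ j.val

lemma om_ne_zero (n : ℕ) : om n ≠ 0 := Complex.exp_ne_zero _

lemma om_pow_n (n : ℕ) (hn : 3 ≤ n) : om n ^ n = -1 := by
  rw [om, ← Complex.exp_nat_mul]
  have hne : (n : ℂ) ≠ 0 := by exact_mod_cast (by omega : n ≠ 0)
  rw [show (n : ℂ) * (Real.pi * Complex.I / n) = Real.pi * Complex.I by field_simp]
  exact Complex.exp_pi_mul_I

lemma mu_ne_zero (n : ℕ) (k : Fin n) : mu n k ≠ 0 := pow_ne_zero _ (om_ne_zero n)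

lemma mu_pow_n (n : ℕ) (hn : 3 ≤ n) (k : Fin n) : mu n k ^ n = -1 := by
  rw [mu, ← pow_mul, mul_comm (2 * k.val + 1) n, pow_mul, om_pow_n n hn]
  exact Odd.neg_one_pow ⟨k.val, by ring⟩

section
variable {n : ℕ} [NeZero n] (hn : 3 ≤ n)
include hn

lemma fv_one : (1 : Fin n).val = 1 := by
  rw [Fin.val_one', Nat.mod_eq_of_lt (by omega)]

lemma fv_add_one (j : Fin n) (h : j.val + 1 < n) : (j + 1).val = j.val + 1 := by
  rw [Fin.add_def]; simp only [fv_one hn]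
  exact Nat.mod_eq_of_lt h

lemma fv_add_one_last (j : Fin n) (h : j.val = n - 1) : (j + 1).val = 0 := by
  rw [Fin.add_def]; simp only [fv_one hn, h]
  rw [(by omega : n - 1 + 1 = n), Nat.mod_self]

lemma fv_sub_one (j : Fin n) (h : j.val ≠ 0) : (j - 1).val = j.val - 1 := by
  rw [Fin.sub_def]; simp only [fv_one hn]
  have hj := j.isLt
  rw [(by omega : n - 1 + j.val = (j.val - 1) + n), Nat.add_mod_right,
    Nat.mod_eq_of_lt (by omega)]

lemma fv_sub_one_zero (j : Fin n) (h : j.val = 0) : (j - 1).val = n - 1 := by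
  rw [Fin.sub_def]; simp only [fv_one hn, h]
  rw [Nat.add_zero, Nat.mod_eq_of_lt (by omega)]

lemma fin_addone_ne_subone (j : Fin n) : j + 1 ≠ j - 1 := by
  intro hcon
  have hj := j.isLt
  have hv := congrArg Fin.val hcon
  by_cases h : j.val + 1 < n
  · rw [fv_add_one hn j h] at hv
    by_cases h0 : j.val = 0
    · rw [fv_sub_one_zero hn j h0] at hv; omega
    · rw [fv_sub_one hn j h0] at hv; omega
  · have hlast : j.val = n - 1 := by omega
    rw [fv_add_one_last hn j hlast, fv_sub_one hn j (by omega)] at hv; omega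

lemma fv_ne_add_two (j : Fin n) : j ≠ j + 1 + 1 := by
  intro hcon
  rw [add_assoc, left_eq_add] at hcon
  have hv : ((1 : Fin n) + 1).val = 0 := by rw [hcon]; rfl
  rw [fv_add_one hn 1 (by rw [fv_one hn]; omega), fv_one hn] at hv
  omega

lemma adj_iff (u v : Fin n) :
    (SimpleGraph.cycleGraph n).Adj u v ↔ (v = u + 1 ∨ u = v + 1) := by
  rw [SimpleGraph.cycleGraph_adj']
  have key : ∀ a b : Fin n, (a - b).val = 1 ↔ a = b + 1 := by
    intro a b
    constructor
    · intro hv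
      have h1 : a - b = 1 := by rw [Fin.ext_iff, hv, fv_one hn]
      rw [sub_eq_iff_eq_add] at h1; rw [h1]; exact add_comm _ _
    · intro hv
      rw [hv, add_sub_cancel_left, fv_one hn]
  rw [key, key]; tauto

lemma adj_add_one (u : Fin n) : (SimpleGraph.cycleGraph n).Adj u (u + 1) := by
  rw [adj_iff hn]; left; rfl

end

lemma Bmat_mul_Umat (n : ℕ) [NeZero n] (hn : 3 ≤ n) :
    (Bmat n).map (fun x : ℝ => (x : ℂ)) * Umat n = Umat n * Matrix.diagonal (lamC n) := by
  ext j k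
  have hz0 : mu n k ≠ 0 := mu_ne_zero n k
  have hzn : mu n k ^ n = -1 := mu_pow_n n hn k
  have hzz : mu n k * (mu n k)⁻¹ = 1 := mul_inv_cancel₀ hz0
  have hj := j.isLt
  rw [Matrix.mul_apply, Matrix.mul_diagonal]
  have hsum : ∀ u : Fin n, ((Bmat n).map (fun x : ℝ => (x : ℂ))) j u * Umat n u k
      = (if u = j + 1 then (cc n j : ℂ) * Umat n u k else 0)
        + (if u = j - 1 then (cc n (j - 1) : ℂ) * Umat n u k else 0) := by
    intro u
    rw [Matrix.map_apply]
    by_cases h1 : u = j + 1 <;> by_cases h2 : u = j - 1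
    · exact absurd (h1 ▸ h2) (fin_addone_ne_subone hn j)
    · rw [if_pos h1, if_neg h2, add_zero]
      have hc2 : ¬ (j = u + 1) := by rw [h1]; exact fv_ne_add_two hn j
      simp only [Bmat, Matrix.of_apply, if_pos h1, if_neg hc2, add_zero]
    · have hc2 : j = u + 1 := by rw [h2, sub_add_cancel]
      rw [if_neg h1, if_pos h2, zero_add]
      simp only [Bmat, Matrix.of_apply, if_neg h1, if_pos hc2, zero_add]
      rw [h2]
    · have hc2 : ¬ (j = u + 1) := fun hcon => h2 (by rw [hcon, add_sub_cancel_right])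
      rw [if_neg h1, if_neg h2, add_zero]
      simp only [Bmat, Matrix.of_apply, if_neg h1, if_neg hc2, add_zero]
      push_cast
      ring
  rw [Finset.sum_congr rfl (fun u _ => hsum u), Finset.sum_add_distrib,
    Finset.sum_ite_eq' Finset.univ (j + 1), Finset.sum_ite_eq' Finset.univ (j - 1),
    if_pos (Finset.mem_univ _), if_pos (Finset.mem_univ _)]
  simp only [Umat, Matrix.of_apply, lamC, cc]
  by_cases h0 : j.val = 0
  · rw [fv_add_one hn j (by omega), fv_sub_one_zero hn j h0, h0]
    rw [if_neg (by omega : ¬ (0 : ℕ) = n - 1), if_pos rfl]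
    have h1 : mu n k ^ (n - 1) * mu n k = -1 := by
      rw [← pow_succ, (by omega : n - 1 + 1 = n), hzn]
    push_cast
    field_simp
    linear_combination -h1
  · by_cases hl : j.val = n - 1
    · rw [fv_add_one_last hn j hl, fv_sub_one hn j h0, hl, if_pos rfl,
        if_neg (by omega : ¬ (n - 1 - 1 : ℕ) = n - 1)]
      have h1 : mu n k ^ (n - 1 - 1) * mu n k * mu n k = -1 := by
        rw [← pow_succ, ← pow_succ, (by omega : n - 1 - 1 + 1 + 1 = n), hzn]
      have hp : mu n k ^ (n - 1) = mu n k ^ (n - 1 - 1) * mu n k := by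
        rw [← pow_succ, (by omega : n - 1 - 1 + 1 = n - 1)]
      rw [hp]
      push_cast
      linear_combination -h1 - (mu n k ^ (n - 1 - 1)) * hzz
    · rw [fv_add_one hn j (by omega), fv_sub_one hn j h0,
        if_neg hl, if_neg (by omega : ¬ (j.val - 1 : ℕ) = n - 1)]
      obtain ⟨a, ha⟩ : ∃ a, j.val = a + 1 := ⟨j.val - 1, by omega⟩
      rw [ha, Nat.add_sub_cancel]
      push_cast
      field_simp
      ring

lemma mu_injective (n : ℕ) [NeZero n] (hn : 3 ≤ n) : Function.Injective (mu n) := by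
  intro k k' hkk
  have hne : (n : ℂ) ≠ 0 := by exact_mod_cast (by omega : n ≠ 0)
  have hπ : (Real.pi : ℂ) ≠ 0 := by exact_mod_cast Real.pi_ne_zero
  have hI : Complex.I ≠ 0 := Complex.I_ne_zero
  rw [mu, mu, om, ← Complex.exp_nat_mul, ← Complex.exp_nat_mul,
    Complex.exp_eq_exp_iff_exists_int] at hkk
  obtain ⟨q, hq⟩ := hkk
  have h2 : ((2 * k.val + 1 : ℤ) : ℂ) * (Real.pi * Complex.I)
      = (((2 * k'.val + 1) + 2 * q * n : ℤ) : ℂ) * (Real.pi * Complex.I) := by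
    push_cast
    field_simp at hq
    push_cast at hq
    linear_combination (↑Real.pi * Complex.I) * hq
  have h3 : ((2 * k.val + 1 : ℤ)) = ((2 * k'.val + 1) + 2 * q * n : ℤ) := by
    have := mul_right_cancel₀ (mul_ne_zero hπ hI) h2
    exact_mod_cast this
  have hk : (k.val : ℤ) < n := by exact_mod_cast k.isLt
  have hk' : (k'.val : ℤ) < n := by exact_mod_cast k'.isLt
  have hk0 : (0 : ℤ) ≤ k.val := Int.ofNat_nonneg _
  have hk0' : (0 : ℤ) ≤ k'.val := Int.ofNat_nonneg _
  have hnz : (0 : ℤ) < n := by exact_mod_cast (by omega : 0 < n)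
  have hqn : (k.val : ℤ) - k'.val = q * n := by linarith
  have hq0 : q = 0 := by
    rcases lt_trichotomy q 0 with hq | hq | hq
    · have h4 : q ≤ -1 := by omega
      have h5 : q * n ≤ -1 * n := mul_le_mul_of_nonneg_right h4 (le_of_lt hnz)
      linarith
    · exact hq
    · have h4 : (1 : ℤ) ≤ q := hq
      have h5 : 1 * n ≤ q * n := mul_le_mul_of_nonneg_right h4 (le_of_lt hnz)
      linarith
  rw [hq0] at hqn
  rw [Fin.ext_iff]
  omega

lemma Umat_det_isUnit (n : ℕ) [NeZero n] (hn : 3 ≤ n) : IsUnit (Umat n).det := by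
  have hU : Umat n = (Matrix.vandermonde (mu n)).transpose := by
    ext j k; rfl
  rw [isUnit_iff_ne_zero, hU, Matrix.det_transpose, Matrix.det_vandermonde]
  apply Finset.prod_ne_zero_iff.mpr
  intro i _
  apply Finset.prod_ne_zero_iff.mpr
  intro j hj
  rw [Finset.mem_Ioi] at hj
  exact sub_ne_zero.mpr (fun hcon => absurd (mu_injective n hn hcon) (ne_of_gt hj))

open Complex in
lemma lamC_eq (n : ℕ) [NeZero n] (hn : 3 ≤ n) (k : Fin n) :
    lamC n k = ((2 * Real.cos (((2 * k.val + 1 : ℕ) : ℝ) * Real.pi / n) : ℝ) : ℂ) := by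
  have hmu : mu n k = Complex.exp (((((2 * k.val + 1 : ℕ) : ℝ) * Real.pi / n : ℝ) : ℂ)
      * Complex.I) := by
    rw [mu, om, ← Complex.exp_nat_mul]
    congr 1
    push_cast
    ring
  have hmuinv : (mu n k)⁻¹ = Complex.exp (-(((((2 * k.val + 1 : ℕ) : ℝ) * Real.pi / n : ℝ) : ℂ)
      * Complex.I)) := by
    rw [hmu, ← Complex.exp_neg]
  rw [lamC, hmuinv, hmu, show -(((((2 * k.val + 1 : ℕ) : ℝ) * Real.pi / n : ℝ) : ℂ) * Complex.I)
      = ((-(((2 * k.val + 1 : ℕ) : ℝ) * Real.pi / n) : ℝ) : ℂ) * Complex.I by push_cast; ring,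
    Complex.exp_mul_I, Complex.exp_mul_I]
  simp only [Complex.ofReal_neg, Complex.cos_neg, Complex.sin_neg]
  push_cast [Complex.ofReal_cos]
  ring

lemma Bmat_charpoly (n : ℕ) [NeZero n] (hn : 3 ≤ n) :
    ((Bmat n).map (fun x : ℝ => (x : ℂ))).charpoly
      = ∏ k : Fin n, (X - C ((2 * Real.cos (((2 * k.val + 1 : ℕ) : ℝ) * Real.pi / n) : ℝ) : ℂ)) := by
  have hU := Umat_det_isUnit n hn
  have hB : (Bmat n).map (fun x : ℝ => (x : ℂ))
      = Umat n * Matrix.diagonal (lamC n) * (Umat n)⁻¹ := by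
    rw [← Bmat_mul_Umat n hn, Matrix.mul_nonsing_inv_cancel_right _ _ hU]
  rw [hB, my_charpoly_conj _ _ _ (Matrix.mul_nonsing_inv _ hU), my_charpoly_diagonal]
  exact Finset.prod_congr rfl (fun k _ => by rw [lamC_eq n hn k])


open Polynomial in
lemma my_herm_charpoly {n : Type*} [Fintype n] [DecidableEq n] {A : Matrix n n ℝ}
    (hA : A.IsHermitian) :
    A.charpoly = ∏ i, (X - C (hA.eigenvalues i)) := by
  conv_lhs => rw [hA.spectral_theorem, Unitary.conjStarAlgAut_apply]
  rw [my_charpoly_conj _ _ _ ((Matrix.mem_unitaryGroup_iff).mp (hA.eigenvectorUnitary).2),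
    my_charpoly_diagonal]
  congr 1

private def cum (s : ℕ → ℝ) : ℕ → ℝ
  | 0 => 1
  | m + 1 => cum s m * s m

lemma my_walk_prod {V : Type*} (Γ : SignedGraph V) (θ : V → ℝ)
    (hθ : ∀ v, θ v * θ v = 1) (hs : ∀ u v, Γ.G.Adj u v → Γ.sign u v = θ u * θ v)
    {u v : V} (p : Γ.G.Walk u v) : (p.edges.map Γ.edgeSign).prod = θ u * θ v := by
  induction p with
  | nil => rw [SimpleGraph.Walk.edges_nil, List.map_nil, List.prod_nil]; exact (hθ _).symm
  | @cons a b c hab q ih =>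
      rw [SimpleGraph.Walk.edges_cons, List.map_cons, List.prod_cons, ih]
      have he : Γ.edgeSign s(a, b) = Γ.sign a b := rfl
      rw [he, hs a b hab]
      linear_combination θ a * θ c * hθ b

end Helpers

/-- negative inertia index of an unbalanced signed cycle. -/


theorem negInertia_unbalanced_cycle (n : ℕ) (hn : 3 ≤ n) (Γ : SignedGraph (Fin n))
    (h : Γ.G = SimpleGraph.cycleGraph n) (hb : ¬ Γ.Balanced) :
    ((n % 4 = 2 ∨ n % 4 = 3) → Γ.negInertia = (n + 1) / 2 - 1) ∧
      ((n % 4 = 0 ∨ n % 4 = 1) → Γ.negInertia = (n + 1) / 2) := by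
  classical
  haveI : NeZero n := ⟨by omega⟩
  set s : ℕ → ℝ := fun m => open Fin.NatCast in Γ.sign ((m : Fin n)) ((m : Fin n) + 1) with hs_def
  have hadj : ∀ u : Fin n, Γ.G.Adj u (u + 1) := by
    intro u; rw [h]; exact adj_add_one hn u
  have hadj_iff : ∀ u v : Fin n, Γ.G.Adj u v ↔ (v = u + 1 ∨ u = v + 1) := by
    intro u v; rw [h]; exact adj_iff hn u v
  have hs_pm : ∀ m : ℕ, s m = 1 ∨ s m = -1 := fun m => Γ.sign_pm _ _ (hadj _)
  set e : ℕ → ℝ := cum s with he_def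
  have he_step : ∀ m, e (m + 1) = e m * s m := fun m => rfl
  have he_pm : ∀ m, e m = 1 ∨ e m = -1 := by
    intro m
    induction m with
    | zero => left; rfl
    | succ k ih =>
        rw [he_step k]
        rcases ih with h1 | h1 <;> rcases hs_pm k with h2 | h2 <;> rw [h1, h2] <;> norm_num
  have he_sq : ∀ m, e m * e m = 1 := by
    intro m; rcases he_pm m with h1 | h1 <;> rw [h1] <;> norm_num
  set θ : Fin n → ℝ := fun v => e v.val with hθ_def
  have hθ_sq : ∀ v, θ v * θ v = 1 := fun v => he_sq _
  have hsign_val : ∀ u : Fin n, Γ.sign u (u + 1) = s u.val := by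
    intro u
    have hcast : (open Fin.NatCast in ((u.val : Fin n))) = u := Fin.cast_val_eq_self u
    rw [hs_def]
    simp only [hcast]
  have hedge : ∀ u : Fin n,
      Γ.sign u (u + 1) = θ u * (if u.val = n - 1 then e n else 1) * θ (u + 1) := by
    intro u
    have hu := u.isLt
    by_cases hl : u.val = n - 1
    · rw [if_pos hl]
      have hv0 : (u + 1).val = 0 := fv_add_one_last hn u hl
      have h0 : θ (u + 1) = 1 := by rw [hθ_def]; simp only [hv0]; rfl
      have hen : e n = e (n - 1) * s (n - 1) := by
        conv_lhs => rw [show n = (n - 1) + 1 by omega]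
        exact he_step (n - 1)
      rw [h0, mul_one, hen, hsign_val u, hl]
      have hq := he_sq (n - 1)
      rw [hθ_def]
      simp only [hl]
      linear_combination (-(s (n - 1))) * hq
    · rw [if_neg hl, mul_one]
      have hv1 : (u + 1).val = u.val + 1 := fv_add_one hn u (by omega)
      rw [hsign_val u, hθ_def]
      simp only [hv1, he_step]
      linear_combination (-(s u.val)) * he_sq u.val
  have hε : e n = -1 := by
    rcases he_pm n with h1 | h1
    · exfalso
      apply hb
      intro v w _
      have hswitch : ∀ u v : Fin n, Γ.G.Adj u v → Γ.sign u v = θ u * θ v := by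
        intro a b hab
        rcases (hadj_iff a b).mp hab with hv | hv
        · have hone : (if a.val = n - 1 then e n else 1) = 1 := by
            rw [h1]; exact ite_self 1
          rw [hv, hedge a, hone, mul_one]
        · have hone : (if b.val = n - 1 then e n else 1) = 1 := by
            rw [h1]; exact ite_self 1
          rw [Γ.sign_symm, hv, hedge b, hone, mul_one]; ring
      rw [my_walk_prod Γ θ hθ_sq hswitch w]
      exact hθ_sq v
    · exact h1
  set Dm : Matrix (Fin n) (Fin n) ℝ := Matrix.diagonal θ with hD_def
  have hDD : Dm * Dm = 1 := by
    rw [hD_def, Matrix.diagonal_mul_diagonal]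
    have hfe : (fun i => θ i * θ i) = fun _ => (1 : ℝ) := funext hθ_sq
    rw [hfe, Matrix.diagonal_one]
  have hAB : Γ.adjMatrix = Dm * Bmat n * Dm := by
    ext u v
    have hDBD : (Dm * Bmat n * Dm) u v = θ u * Bmat n u v * θ v := by
      rw [hD_def, Matrix.mul_diagonal, Matrix.diagonal_mul]
    rw [hDBD]
    simp only [SignedGraph.adjMatrix]
    by_cases hv : v = u + 1
    · rw [if_pos ((hadj_iff u v).mpr (Or.inl hv))]
      have hBe : Bmat n u v = cc n u := by
        simp only [Bmat, Matrix.of_apply, if_pos hv, hv, if_neg (fv_ne_add_two hn u), add_zero, if_true, ite_true]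
      rw [hBe, hv, hedge u, hε, cc]
    · by_cases hu : u = v + 1
      · rw [if_pos ((hadj_iff u v).mpr (Or.inr hu))]
        have hBe : Bmat n u v = cc n v := by
          simp only [Bmat, Matrix.of_apply, if_neg hv, if_pos hu, zero_add]
        rw [hBe, Γ.sign_symm, hu, hedge v, hε, cc]
        ring
      · rw [if_neg (fun hcon => by
          rcases (hadj_iff u v).mp hcon with hh | hh
          · exact hv hh
          · exact hu hh)]
        have hBe : Bmat n u v = 0 := by
          simp only [Bmat, Matrix.of_apply, if_neg hv, if_neg hu, add_zero]
        rw [hBe]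
        ring
  have hch1 : Γ.adjMatrix.charpoly = ∏ i, (Polynomial.X - Polynomial.C (Γ.isHermitian.eigenvalues i)) :=
    my_herm_charpoly Γ.isHermitian
  have hch2 : Γ.adjMatrix.charpoly = (Bmat n).charpoly := by
    rw [hAB]; exact my_charpoly_conj Dm Dm (Bmat n) hDD
  have hmapch : ((Bmat n).map (fun x : ℝ => (x : ℂ))).charpoly
      = ((Bmat n).charpoly).map Complex.ofRealHom :=
    Matrix.charpoly_map (Bmat n) Complex.ofRealHom
  have hprod : (∏ i, (Polynomial.X - Polynomial.C ((Γ.isHermitian.eigenvalues i : ℝ) : ℂ)))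
      = ∏ k : Fin n, (Polynomial.X - Polynomial.C
          ((2 * Real.cos (((2 * k.val + 1 : ℕ) : ℝ) * Real.pi / n) : ℝ) : ℂ)) := by
    have h4 : ((Bmat n).charpoly).map Complex.ofRealHom
        = ∏ k : Fin n, (Polynomial.X - Polynomial.C
            ((2 * Real.cos (((2 * k.val + 1 : ℕ) : ℝ) * Real.pi / n) : ℝ) : ℂ)) := by
      rw [← hmapch, Bmat_charpoly n hn]
    have h5 : ((Bmat n).charpoly).map Complex.ofRealHom
        = ∏ i, (Polynomial.X - Polynomial.C ((Γ.isHermitian.eigenvalues i : ℝ) : ℂ)) := by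
      rw [← hch2, hch1, Polynomial.map_prod]
      simp only [Polynomial.map_sub, Polynomial.map_X, Polynomial.map_C]
      rfl
    rw [← h5, h4]
  have hms : Multiset.map Γ.isHermitian.eigenvalues Finset.univ.val
      = Multiset.map (fun k : Fin n => 2 * Real.cos (((2 * k.val + 1 : ℕ) : ℝ) * Real.pi / n))
          Finset.univ.val := by
    apply Multiset.map_injective (Complex.ofReal_injective)
    rw [Multiset.map_map, Multiset.map_map]
    exact my_multiset_eq_of_prod _ _ hprod
  have e1 : ∀ (w : Fin n → ℝ), (Finset.univ.filter fun i : Fin n => w i < 0).card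
      = Multiset.card (Multiset.filter (fun x : ℝ => x < 0) (Multiset.map w Finset.univ.val)) := by
    intro w
    rw [Multiset.filter_map, Multiset.card_map, Finset.card_def, Finset.filter_val]
    congr 1
  have hcount : Γ.negInertia = (Finset.univ.filter
      (fun k : Fin n => 2 * Real.cos (((2 * k.val + 1 : ℕ) : ℝ) * Real.pi / n) < 0)).card := by
    rw [SignedGraph.negInertia, e1, hms, ← e1]
  have hfeq : (Finset.univ.filter
        (fun k : Fin n => 2 * Real.cos (((2 * k.val + 1 : ℕ) : ℝ) * Real.pi / n) < 0))
      = Finset.univ.filter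
        (fun k : Fin n => n < 2 * (2 * k.val + 1) ∧ 2 * (2 * k.val + 1) < 3 * n) := by
    apply Finset.filter_congr
    intro k _
    exact my_cos_neg_iff n k.val hn k.isLt
  have hfinal : Γ.negInertia = (3 * n + 1) / 4 - (n + 2) / 4 := by
    rw [hcount, hfeq, my_count n hn]
  constructor <;> rintro (hr | hr) <;> omega
end

section
/- Let Γ be a signed graph containing a pendant vertex u (a vertex of degree 1), and let Γ' be the induced signed subgraph obtained by deleting u and its unique neighbor. Then i₊(Γ) = i₊(Γ') + 1 and i₋(Γ) = i₋(Γ') + 1 (and consequently η(Γ) = η(Γ')). -/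
open Matrix

set_option linter.unusedSectionVars false
open Matrix Finset Module Submodule
open scoped InnerProductSpace

namespace PendantAux

variable {n : Type*} [Fintype n] [DecidableEq n]
variable {A : Matrix n n ℝ} (hA : A.IsHermitian)

noncomputable abbrev eb := hA.eigenvectorBasis

lemma T_apply (x : EuclideanSpace ℝ n) : Matrix.toEuclideanLin A x = A *ᵥ x := rfl

lemma T_eb (i : n) : Matrix.toEuclideanLin A (eb hA i) = hA.eigenvalues i • eb hA i := by
  have := hA.mulVec_eigenvectorBasis i
  ext j
  exact congrFun this j

noncomputable def spanOf (p : n → Prop) : Submodule ℝ (EuclideanSpace ℝ n) :=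
  Submodule.span ℝ (Set.range fun i : {i // p i} => eb hA i)

lemma finrank_spanOf (p : n → Prop) [DecidablePred p] :
    finrank ℝ (spanOf hA p) = (univ.filter p).card := by
  have li : LinearIndependent ℝ fun i : {i // p i} => eb hA i :=
    ((eb hA).orthonormal.linearIndependent).comp Subtype.val Subtype.val_injective
  rw [spanOf, finrank_span_eq_card li, ← Fintype.card_subtype]

lemma inner_eq_zero_of_mem_spanOf {p : n → Prop} {x : EuclideanSpace ℝ n}
    (hx : x ∈ spanOf hA p) {i : n} (hi : ¬ p i) : ⟪eb hA i, x⟫_ℝ = 0 := by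
  induction hx using Submodule.span_induction with
  | mem y hy =>
    obtain ⟨j, rfl⟩ := hy
    exact (eb hA).orthonormal.2 (fun h => hi (h ▸ j.2))
  | zero => exact inner_zero_right _
  | add a b _ _ ha hb => rw [inner_add_right, ha, hb, add_zero]
  | smul c a _ ha => rw [real_inner_smul_right, ha, mul_zero]

lemma eq_zero_of_forall_inner {x : EuclideanSpace ℝ n}
    (h : ∀ i, ⟪eb hA i, x⟫_ℝ = 0) : x = 0 := by
  have := (eb hA).sum_repr x
  rw [← this]
  refine Finset.sum_eq_zero fun i _ => ?_
  rw [(eb hA).repr_apply_apply, h i, zero_smul]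

lemma quad_eq_sum (x : EuclideanSpace ℝ n) :
    (x ⬝ᵥ (A *ᵥ x) : ℝ) = ∑ i, hA.eigenvalues i * (⟪eb hA i, x⟫_ℝ)^2 := by
  have h1 : (x ⬝ᵥ (A *ᵥ x) : ℝ) = ⟪x, Matrix.toEuclideanLin A x⟫_ℝ := by
    simp [PiLp.inner_apply, dotProduct, RCLike.inner_apply, mul_comm, T_apply]
  have hsym : (Matrix.toEuclideanLin A).IsSymmetric :=
    (Matrix.isHermitian_iff_isSymmetric).1 hA
  rw [h1]
  nth_rewrite 1 [← (eb hA).sum_repr x]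
  rw [sum_inner]
  refine Finset.sum_congr rfl fun i _ => ?_
  rw [real_inner_smul_left, ← hsym (eb hA i) x, T_eb, real_inner_smul_left,
    (eb hA).repr_apply_apply]
  ring

lemma exists_posdef_subspace (ε : ℝ) :
    ∃ W : Submodule ℝ (EuclideanSpace ℝ n),
      finrank ℝ W = (univ.filter fun i => 0 < ε * hA.eigenvalues i).card ∧
      ∀ x ∈ W, x ≠ 0 → 0 < ε * (x ⬝ᵥ (A *ᵥ x)) := by
  classical
  refine ⟨spanOf hA (fun i => 0 < ε * hA.eigenvalues i), finrank_spanOf hA _, ?_⟩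
  intro x hx hx0
  rw [quad_eq_sum hA, Finset.mul_sum]
  refine Finset.sum_pos' (fun i _ => ?_) ?_
  · by_cases h : 0 < ε * hA.eigenvalues i
    · have : ε * (hA.eigenvalues i * ⟪eb hA i, x⟫_ℝ ^ 2) =
        (ε * hA.eigenvalues i) * ⟪eb hA i, x⟫_ℝ ^ 2 := by ring
      rw [this]
      positivity
    · rw [inner_eq_zero_of_mem_spanOf hA hx h]
      simp
  · by_contra hc
    push_neg at hc
    refine hx0 (eq_zero_of_forall_inner hA fun i => ?_)
    by_cases h : 0 < ε * hA.eigenvalues i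
    · have h2 := hc i (mem_univ i)
      have h3 : ε * (hA.eigenvalues i * ⟪eb hA i, x⟫_ℝ ^ 2) =
        (ε * hA.eigenvalues i) * ⟪eb hA i, x⟫_ℝ ^ 2 := by ring
      rw [h3] at h2
      by_contra hne
      have hsq : 0 < ⟪eb hA i, x⟫_ℝ ^ 2 := by positivity
      nlinarith [mul_pos h hsq]
    · exact inner_eq_zero_of_mem_spanOf hA hx h

lemma posdef_subspace_le (ε : ℝ) (W : Submodule ℝ (EuclideanSpace ℝ n))
    (hW : ∀ x ∈ W, x ≠ 0 → 0 < ε * (x ⬝ᵥ (A *ᵥ x))) :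
    finrank ℝ W ≤ (univ.filter fun i => 0 < ε * hA.eigenvalues i).card := by
  classical
  set N := spanOf hA (fun i => ¬ 0 < ε * hA.eigenvalues i) with hN
  have hNq : ∀ x ∈ N, ε * (x ⬝ᵥ (A *ᵥ x)) ≤ 0 := by
    intro x hx
    rw [quad_eq_sum hA, Finset.mul_sum]
    refine Finset.sum_nonpos fun i _ => ?_
    by_cases h : 0 < ε * hA.eigenvalues i
    · rw [inner_eq_zero_of_mem_spanOf hA hx (fun hh => hh h)]
      simp
    · push_neg at h
      have h3 : ε * (hA.eigenvalues i * ⟪eb hA i, x⟫_ℝ ^ 2) =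
        (ε * hA.eigenvalues i) * ⟪eb hA i, x⟫_ℝ ^ 2 := by ring
      rw [h3]
      exact mul_nonpos_of_nonpos_of_nonneg h (sq_nonneg _)
  have hdisj : W ⊓ N = ⊥ := by
    rw [eq_bot_iff]
    intro x hx
    by_contra hx0
    have hx0' : x ≠ 0 := fun h => hx0 (h ▸ Submodule.zero_mem ⊥)
    exact absurd (hNq x hx.2) (not_le.2 (hW x hx.1 hx0'))
  have hsum := Submodule.finrank_sup_add_finrank_inf_eq W N
  rw [hdisj, finrank_bot, add_zero] at hsum
  have hle : finrank ℝ ↥(W ⊔ N) ≤ finrank ℝ (EuclideanSpace ℝ n) :=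
    Submodule.finrank_le _
  rw [finrank_euclideanSpace] at hle
  have hNrank : finrank ℝ N = (univ.filter fun i => ¬ 0 < ε * hA.eigenvalues i).card :=
    finrank_spanOf hA _
  have hpart := Finset.card_filter_add_card_filter_not
    (s := univ) (p := fun i => 0 < ε * hA.eigenvalues i)
  rw [Finset.card_univ] at hpart
  omega

lemma finrank_ker_eq :
    finrank ℝ (LinearMap.ker (Matrix.toEuclideanLin A)) =
      (univ.filter fun i => hA.eigenvalues i = 0).card := by
  classical
  have hker : LinearMap.ker (Matrix.toEuclideanLin A) =
      spanOf hA (fun i => hA.eigenvalues i = 0) := by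
    apply le_antisymm
    · intro x hx
      have hx0 : Matrix.toEuclideanLin A x = 0 := hx
      have hc : ∀ i, hA.eigenvalues i ≠ 0 → ⟪eb hA i, x⟫_ℝ = 0 := by
        intro i hi
        have hsym : (Matrix.toEuclideanLin A).IsSymmetric :=
          (Matrix.isHermitian_iff_isSymmetric).1 hA
        have : ⟪eb hA i, Matrix.toEuclideanLin A x⟫_ℝ = 0 := by rw [hx0]; simp
        rw [← hsym (eb hA i) x, T_eb, real_inner_smul_left] at this
        simpa [hi] using this
      nth_rewrite 1 [← (eb hA).sum_repr x]
      refine Submodule.sum_mem _ fun i _ => ?_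
      by_cases h : hA.eigenvalues i = 0
      · exact Submodule.smul_mem _ _ (Submodule.subset_span ⟨⟨i, h⟩, rfl⟩)
      · rw [(eb hA).repr_apply_apply, hc i h, zero_smul]
        exact Submodule.zero_mem _
    · rw [spanOf, Submodule.span_le]
      rintro y ⟨j, rfl⟩
      simp only [SetLike.mem_coe, LinearMap.mem_ker]
      rw [T_eb, j.2, zero_smul]
  rw [hker, finrank_spanOf hA _]

section Comp

variable {V : Type*} [Fintype V] [DecidableEq V]

/-- vertex set with `u,v` removed -/
abbrev del (u v : V) : Finset V := Finset.univ \ ({u, v} : Finset V)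

lemma mem_del {u v w : V} : w ∈ del u v ↔ w ≠ u ∧ w ≠ v := by
  simp [del]

lemma not_mem_del_left (u v : V) : u ∉ del u v := by simp [mem_del]
lemma not_mem_del_right (u v : V) : v ∉ del u v := by simp [mem_del]

variable (A : Matrix V V ℝ) (u v : V)

/-- correction coefficient -/
noncomputable def cmap (y : {x // x ∈ del u v} → ℝ) : ℝ :=
  -(A u v) * ∑ w' : {x // x ∈ del u v}, A w'.1 v * y w'

/-- the embedding of vectors -/
noncomputable def phiFun (y : {x // x ∈ del u v} → ℝ) : V → ℝ :=
  fun w => if h : w ∈ del u v then y ⟨w, h⟩ else if w = u then cmap A u v y else 0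

/-- the extra vector supported on u, v -/
def zFun (t : ℝ) : V → ℝ := fun w => if w = u then t else if w = v then 1 else 0

variable {u v}

lemma sum_split (hne : u ≠ v) (g : V → ℝ) :
    ∑ w, g w = g u + g v + ∑ a : {x // x ∈ del u v}, g ↑a := by
  have h1 : ∑ w ∈ del u v, g w + ∑ w ∈ ({u, v} : Finset V), g w = ∑ w, g w :=
    Finset.sum_sdiff (Finset.subset_univ _)
  have h2 : ∑ w ∈ ({u, v} : Finset V), g w = g u + g v := Finset.sum_pair hne
  have h3 : ∑ a : {x // x ∈ del u v}, g ↑a = ∑ w ∈ del u v, g w :=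
    Finset.sum_coe_sort _ _
  rw [h3]; linarith

variable {A}

lemma phi_apply_mem (y : {x // x ∈ del u v} → ℝ) (a : {x // x ∈ del u v}) :
    phiFun A u v y ↑a = y a := by
  simp [phiFun, a.2]

lemma phi_apply_u (y : {x // x ∈ del u v} → ℝ) : phiFun A u v y u = cmap A u v y := by
  simp [phiFun, not_mem_del_left]

lemma phi_apply_v (hne : u ≠ v) (y : {x // x ∈ del u v} → ℝ) : phiFun A u v y v = 0 := by
  simp [phiFun, not_mem_del_right, hne.symm]

lemma z_apply_u (t : ℝ) : zFun u v t u = t := by simp [zFun]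
lemma z_apply_v (hne : u ≠ v) (t : ℝ) : zFun u v t v = 1 := by simp [zFun, hne.symm]
lemma z_apply_mem (t : ℝ) (a : {x // x ∈ del u v}) : zFun u v t ↑a = 0 := by
  have := a.2
  rw [mem_del] at this
  simp [zFun, this.1, this.2]


lemma dot_symm (hsymm : ∀ a b, A a b = A b a) (x y : V → ℝ) :
    x ⬝ᵥ (A *ᵥ y) = y ⬝ᵥ (A *ᵥ x) := by
  simp only [dotProduct, Matrix.mulVec, Finset.mul_sum]
  rw [Finset.sum_comm]
  exact Finset.sum_congr rfl fun a _ => Finset.sum_congr rfl fun b _ => by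
    rw [hsymm a b]; ring

variable (hne : u ≠ v) (hsymm : ∀ a b, A a b = A b a)
  (hu0 : ∀ w, w ≠ v → A u w = 0) (hsq : A u v * A u v = 1)

section
include hne hu0

lemma mulVec_phi_u (y : {x // x ∈ del u v} → ℝ) :
    (A *ᵥ phiFun A u v y) u = 0 := by
  show ∑ b, A u b * phiFun A u v y b = 0
  rw [Finset.sum_eq_single_of_mem v (Finset.mem_univ v)
    (fun b _ hb => by rw [hu0 b hb, zero_mul])]
  rw [phi_apply_v hne, mul_zero]

include hsymm

lemma mulVec_phi_mem (y : {x // x ∈ del u v} → ℝ) (a : {x // x ∈ del u v}) :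
    (A *ᵥ phiFun A u v y) ↑a = ((A.submatrix ((↑) : {x // x ∈ del u v} → V) ((↑) : {x // x ∈ del u v} → V)) *ᵥ y) a := by
  have hav : (a : V) ≠ v := (mem_del.1 a.2).2
  show ∑ b, A ↑a b * phiFun A u v y b = _
  rw [sum_split hne (fun b => A ↑a b * phiFun A u v y b)]
  rw [phi_apply_u, phi_apply_v hne, hsymm, hu0 _ hav]
  simp only [zero_mul, mul_zero, zero_add, add_zero]
  refine Finset.sum_congr rfl fun b _ => by rw [phi_apply_mem]; rfl

include hsq

lemma mulVec_phi_v (y : {x // x ∈ del u v} → ℝ) :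
    (A *ᵥ phiFun A u v y) v = 0 := by
  show ∑ b, A v b * phiFun A u v y b = 0
  rw [sum_split hne (fun b => A v b * phiFun A u v y b)]
  rw [phi_apply_u, phi_apply_v hne, mul_zero, cmap]
  have h1 : ∑ a : {x // x ∈ del u v}, A v ↑a * phiFun A u v y ↑a
      = ∑ a : {x // x ∈ del u v}, A v ↑a * y a :=
    Finset.sum_congr rfl fun a _ => by rw [phi_apply_mem]
  have h2 : ∑ w' : {x // x ∈ del u v}, A w'.1 v * y w'
      = ∑ a : {x // x ∈ del u v}, A v ↑a * y a :=
    Finset.sum_congr rfl fun a _ => by rw [hsymm]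
  rw [h1, h2, hsymm v u]
  have hexp : ∀ S : ℝ, A u v * (-A u v * S) + 0 + S = (1 - A u v * A u v) * S :=
    fun S => by ring
  rw [hexp, hsq]
  ring

lemma ker_phi (y : {x // x ∈ del u v} → ℝ)
    (hy : (A.submatrix ((↑) : {x // x ∈ del u v} → V) ((↑) : {x // x ∈ del u v} → V)) *ᵥ y = 0) :
    A *ᵥ phiFun A u v y = 0 := by
  funext w
  by_cases h : w ∈ del u v
  · have h' := mulVec_phi_mem hne hsymm hu0 y ⟨w, h⟩
    rw [hy] at h'
    simpa using h'
  · rw [mem_del, not_and_or] at h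
    rcases h with h | h
    · push_neg at h
      subst h
      exact mulVec_phi_u hne hu0 y
    · push_neg at h
      subst h
      exact mulVec_phi_v hne hsymm hu0 hsq y

lemma quad_phi (y : {x // x ∈ del u v} → ℝ) :
    phiFun A u v y ⬝ᵥ (A *ᵥ phiFun A u v y)
      = y ⬝ᵥ ((A.submatrix ((↑) : {x // x ∈ del u v} → V) ((↑) : {x // x ∈ del u v} → V)) *ᵥ y) := by
  show ∑ w, phiFun A u v y w * (A *ᵥ phiFun A u v y) w = _
  rw [sum_split hne, phi_apply_v hne, mulVec_phi_u hne hu0, mul_zero, zero_mul,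
    add_zero, zero_add]
  refine Finset.sum_congr rfl fun a _ => by
    rw [phi_apply_mem, mulVec_phi_mem hne hsymm hu0]

end

section
include hne

lemma mulVec_z (t : ℝ) (a : V) : (A *ᵥ zFun u v t) a = A a u * t + A a v := by
  show ∑ b, A a b * zFun u v t b = _
  rw [sum_split hne (fun b => A a b * zFun u v t b), z_apply_u, z_apply_v hne]
  simp only [mul_one]
  rw [Finset.sum_eq_zero fun b _ => by rw [z_apply_mem, mul_zero]]
  ring

include hsymm hu0 hsq

lemma cross_z_phi (t : ℝ) (y : {x // x ∈ del u v} → ℝ) :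
    zFun u v t ⬝ᵥ (A *ᵥ phiFun A u v y) = 0 := by
  show ∑ w, zFun u v t w * (A *ᵥ phiFun A u v y) w = 0
  rw [sum_split hne, mulVec_phi_u hne hu0, mulVec_phi_v hne hsymm hu0 hsq,
    mul_zero, mul_zero]
  rw [Finset.sum_eq_zero fun a _ => by rw [z_apply_mem, zero_mul]]
  ring

lemma cross_phi_z (t : ℝ) (y : {x // x ∈ del u v} → ℝ) :
    phiFun A u v y ⬝ᵥ (A *ᵥ zFun u v t) = 0 := by
  rw [dot_symm hsymm]
  exact cross_z_phi hne hsymm hu0 hsq t y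

end

lemma quad_z (hne : u ≠ v) (hsymm : ∀ a b, A a b = A b a)
    (huu : A u u = 0) (hvv : A v v = 0) (t : ℝ) :
    zFun u v t ⬝ᵥ (A *ᵥ zFun u v t) = 2 * (A u v * t) := by
  show ∑ w, zFun u v t w * (A *ᵥ zFun u v t) w = _
  rw [sum_split hne, z_apply_u, z_apply_v hne, mulVec_z hne, mulVec_z hne,
    Finset.sum_eq_zero fun a _ => by rw [z_apply_mem, zero_mul]]
  rw [huu, hvv, hsymm v u]
  ring

include hne hsymm hu0 hsq in
lemma quad_total (huu : A u u = 0) (hvv : A v v = 0)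
    (y : {x // x ∈ del u v} → ℝ) (t t₀ : ℝ) :
    (phiFun A u v y + t • zFun u v t₀) ⬝ᵥ (A *ᵥ (phiFun A u v y + t • zFun u v t₀))
      = y ⬝ᵥ ((A.submatrix ((↑) : {x // x ∈ del u v} → V) ((↑) : {x // x ∈ del u v} → V)) *ᵥ y)
        + (2 * (A u v * t₀)) * t ^ 2 := by
  simp only [Matrix.mulVec_add, Matrix.mulVec_smul, add_dotProduct,
    dotProduct_add, smul_dotProduct, dotProduct_smul,
    smul_eq_mul]
  rw [quad_phi hne hsymm hu0 hsq, quad_z hne hsymm huu hvv,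
    cross_z_phi hne hsymm hu0 hsq, cross_phi_z hne hsymm hu0 hsq]
  ring

lemma cmap_add (y y' : {x // x ∈ del u v} → ℝ) :
    cmap A u v (y + y') = cmap A u v y + cmap A u v y' := by
  simp only [cmap, Pi.add_apply, mul_add, Finset.sum_add_distrib]

lemma cmap_smul (c : ℝ) (y : {x // x ∈ del u v} → ℝ) :
    cmap A u v (c • y) = c * cmap A u v y := by
  simp only [cmap, Pi.smul_apply, smul_eq_mul]
  rw [Finset.sum_congr rfl fun a _ =>
    (by ring : A a.1 v * (c * y a) = c * (A a.1 v * y a)), ← Finset.mul_sum]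
  ring

lemma phi_add (y y' : {x // x ∈ del u v} → ℝ) :
    phiFun A u v (y + y') = phiFun A u v y + phiFun A u v y' := by
  funext w
  by_cases h : w ∈ del u v
  · simp [phiFun, h]
  · by_cases h2 : w = u
    · simp [phiFun, h, h2, cmap_add]
    · simp [phiFun, h, h2]

lemma phi_smul (c : ℝ) (y : {x // x ∈ del u v} → ℝ) :
    phiFun A u v (c • y) = c • phiFun A u v y := by
  funext w
  by_cases h : w ∈ del u v
  · simp [phiFun, h]
  · by_cases h2 : w = u
    · simp [phiFun, h, h2, cmap_smul]
    · simp [phiFun, h, h2]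

lemma phi_injective : Function.Injective (phiFun A u v) := by
  intro y y' h
  funext a
  have := congrFun h ↑a
  rwa [phi_apply_mem, phi_apply_mem] at this

end Comp

lemma finrank_sup_span_singleton {K M : Type*} [DivisionRing K] [AddCommGroup M]
    [Module K M] [FiniteDimensional K M] (U : Submodule K M) {z : M}
    (hz : z ∉ U) (hz0 : z ≠ 0) :
    Module.finrank K ↥(U ⊔ K ∙ z) = Module.finrank K U + 1 := by
  have hdisj : U ⊓ (K ∙ z) = ⊥ := by
    rw [eq_bot_iff]
    rintro x ⟨hx1, hx2⟩
    rcases Submodule.mem_span_singleton.1 hx2 with ⟨t, rfl⟩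
    by_cases ht : t = 0
    · subst ht
      simp
    · exact absurd (by simpa [ht] using U.smul_mem t⁻¹ hx1) hz
  have hsup := Submodule.finrank_sup_add_finrank_inf_eq U (K ∙ z)
  rw [hdisj, finrank_bot, add_zero, finrank_span_singleton hz0] at hsup
  exact hsup

section Step

variable {V : Type*} [Fintype V] [DecidableEq V] {A : Matrix V V ℝ} {u v : V}

/-- the embedding as a linear map between Euclidean spaces -/
noncomputable def phiL (A : Matrix V V ℝ) (u v : V) :
    EuclideanSpace ℝ {x // x ∈ del u v} →ₗ[ℝ] EuclideanSpace ℝ V where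
  toFun := fun y => WithLp.toLp 2 (phiFun A u v y.ofLp)
  map_add' := fun y y' => congrArg (WithLp.toLp 2) (phi_add y.ofLp y'.ofLp)
  map_smul' := fun c y => congrArg (WithLp.toLp 2) (phi_smul c y.ofLp)

lemma phiL_injective : Function.Injective (phiL A u v) := fun y y' h => by
  have h2 : phiFun A u v y.ofLp = phiFun A u v y'.ofLp := congrArg WithLp.ofLp h
  exact WithLp.ofLp_injective (p := 2) (phi_injective h2)

lemma phiL_not_mem_z (hne : u ≠ v) (W' : Submodule ℝ (EuclideanSpace ℝ {x // x ∈ del u v}))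
    (t₀ : ℝ) : WithLp.toLp 2 (zFun u v t₀) ∉ W'.map (phiL A u v) := by
  rintro ⟨y, _, hy⟩
  have h2 : phiFun A u v y.ofLp v = zFun u v t₀ v := congrArg (fun f : EuclideanSpace ℝ V => WithLp.ofLp f v) hy
  rw [phi_apply_v hne] at h2
  rw [z_apply_v hne] at h2
  norm_num at h2

lemma zFun_ne_zero (hne : u ≠ v) (t₀ : ℝ) :
    WithLp.toLp 2 (zFun u v t₀) ≠ (0 : EuclideanSpace ℝ V) := by
  intro h
  have h2 : zFun u v t₀ v = 0 := congrArg (fun f : EuclideanSpace ℝ V => WithLp.ofLp f v) h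
  rw [z_apply_v hne] at h2
  norm_num at h2

lemma inertia_step (hA : A.IsHermitian)
    (hB : (A.submatrix ((↑) : {x // x ∈ del u v} → V) ((↑) : {x // x ∈ del u v} → V)).IsHermitian)
    (hne : u ≠ v) (hsymm : ∀ a b, A a b = A b a)
    (hu0 : ∀ w, w ≠ v → A u w = 0) (hsq : A u v * A u v = 1)
    (huu : A u u = 0) (hvv : A v v = 0)
    (ε : ℝ) (hε : ε = 1 ∨ ε = -1) :
    (Finset.univ.filter fun i => 0 < ε * hB.eigenvalues i).card + 1
      ≤ (Finset.univ.filter fun i => 0 < ε * hA.eigenvalues i).card := by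
  classical
  obtain ⟨W', hW'rank, hW'pos⟩ := exists_posdef_subspace hB ε
  set t₀ : ℝ := ε * A u v with ht₀
  have hcoef : A u v * t₀ = ε := by
    rw [ht₀, show A u v * (ε * A u v) = ε * (A u v * A u v) from by ring, hsq, mul_one]
  have hzp : (WithLp.toLp 2 (zFun u v t₀) : EuclideanSpace ℝ V) = WithLp.toLp 2 (zFun u v t₀) := rfl
  set zp : EuclideanSpace ℝ V := WithLp.toLp 2 (zFun u v t₀)
  set W : Submodule ℝ (EuclideanSpace ℝ V) := (W'.map (phiL A u v)) ⊔ (ℝ ∙ zp) with hW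
  have hWpos : ∀ x ∈ W, x ≠ 0 → 0 < ε * (x ⬝ᵥ (A *ᵥ x)) := by
    intro x hx hx0
    rcases Submodule.mem_sup.1 hx with ⟨a, ha, b, hb, rfl⟩
    rcases Submodule.mem_map.1 ha with ⟨y, hy, rfl⟩
    rcases Submodule.mem_span_singleton.1 hb with ⟨t, rfl⟩
    have hgoal : ((phiL A u v) y + t • zp).ofLp ⬝ᵥ (A *ᵥ ((phiL A u v) y + t • zp).ofLp)
        = (phiFun A u v y.ofLp + t • zFun u v t₀) ⬝ᵥ (A *ᵥ (phiFun A u v y.ofLp + t • zFun u v t₀)) :=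
      rfl
    rw [hgoal, quad_total hne hsymm hu0 hsq huu hvv y.ofLp t t₀, hcoef]
    by_cases hy0 : y = 0
    · subst hy0
      have ht : t ≠ 0 := by
        intro ht
        subst ht
        apply hx0
        rw [map_zero, zero_smul, add_zero]
      have h0 : (0 : {x // x ∈ del u v} → ℝ) ⬝ᵥ
          ((A.submatrix ((↑) : {x // x ∈ del u v} → V) ((↑) : {x // x ∈ del u v} → V)) *ᵥ 0)
            = 0 := zero_dotProduct _
      rw [WithLp.ofLp_zero, h0]
      have ht2 : 0 < t ^ 2 := by positivity
      rcases hε with h | h <;> subst h <;> nlinarith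
    · have hQy := hW'pos y hy hy0
      have ht2 : 0 ≤ t ^ 2 := sq_nonneg t
      rcases hε with h | h <;> subst h <;> nlinarith
  have hrank : Module.finrank ℝ W = Module.finrank ℝ W' + 1 := by
    have h1 := finrank_sup_span_singleton (K := ℝ) (W'.map (phiL A u v))
      (phiL_not_mem_z hne W' t₀) (zFun_ne_zero hne t₀)
    rw [hW, h1, ← (Submodule.equivMapOfInjective (phiL A u v) phiL_injective W').finrank_eq]
  have hle := posdef_subspace_le hA ε W hWpos
  omega

lemma nullity_step (hA : A.IsHermitian)
    (hB : (A.submatrix ((↑) : {x // x ∈ del u v} → V) ((↑) : {x // x ∈ del u v} → V)).IsHermitian)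
    (hne : u ≠ v) (hsymm : ∀ a b, A a b = A b a)
    (hu0 : ∀ w, w ≠ v → A u w = 0) (hsq : A u v * A u v = 1) :
    (Finset.univ.filter fun i => hB.eigenvalues i = 0).card
      ≤ (Finset.univ.filter fun i => hA.eigenvalues i = 0).card := by
  classical
  rw [← finrank_ker_eq hA, ← finrank_ker_eq hB]
  have hmap : (LinearMap.ker (Matrix.toEuclideanLin
      (A.submatrix ((↑) : {x // x ∈ del u v} → V) ((↑) : {x // x ∈ del u v} → V)))).map
        (phiL A u v) ≤ LinearMap.ker (Matrix.toEuclideanLin A) := by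
    rintro x ⟨y, hy, rfl⟩
    have hy' : (A.submatrix ((↑) : {x // x ∈ del u v} → V) ((↑) : {x // x ∈ del u v} → V)) *ᵥ y
        = 0 := congrArg WithLp.ofLp (LinearMap.mem_ker.1 hy)
    exact LinearMap.mem_ker.2 (congrArg (WithLp.toLp 2) (ker_phi hne hsymm hu0 hsq y.ofLp hy'))
  calc Module.finrank ℝ ↥(LinearMap.ker (Matrix.toEuclideanLin
      (A.submatrix ((↑) : {x // x ∈ del u v} → V) ((↑) : {x // x ∈ del u v} → V))))
      = Module.finrank ℝ ↥((LinearMap.ker (Matrix.toEuclideanLin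
        (A.submatrix ((↑) : {x // x ∈ del u v} → V) ((↑) : {x // x ∈ del u v} → V)))).map
          (phiL A u v)) :=
        (Submodule.equivMapOfInjective (phiL A u v) phiL_injective _).finrank_eq
    _ ≤ _ := Submodule.finrank_mono hmap

end Step


lemma eigen_congr {n : Type*} [Fintype n] [DecidableEq n] {M N : Matrix n n ℝ}
    (h : M = N) (hM : M.IsHermitian) (hN : N.IsHermitian) :
    hM.eigenvalues = hN.eigenvalues := by subst h; rfl

lemma count_partition {n : Type*} [Fintype n] [DecidableEq n] (f : n → ℝ) :
    (Finset.univ.filter fun i => 0 < f i).card + (Finset.univ.filter fun i => f i < 0).card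
      + (Finset.univ.filter fun i => f i = 0).card = Fintype.card n := by
  classical
  have h1 := Finset.card_filter_add_card_filter_not
    (s := Finset.univ) (p := fun i => 0 < f i)
  have h2 : Finset.univ.filter (fun i => ¬ 0 < f i)
      = Finset.univ.filter (fun i => f i < 0) ∪ Finset.univ.filter (fun i => f i = 0) := by
    ext i
    simp only [Finset.mem_filter, Finset.mem_union, Finset.mem_univ, true_and, not_lt]
    constructor
    · intro h
      rcases lt_or_eq_of_le h with h' | h'
      · exact Or.inl h'
      · exact Or.inr h'
    · rintro (h | h)
      · exact le_of_lt h
      · exact le_of_eq h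
  have h3 : Disjoint (Finset.univ.filter (fun i => f i < 0))
      (Finset.univ.filter (fun i => f i = 0)) := by
    rw [Finset.disjoint_left]
    intro i hi1 hi2
    simp only [Finset.mem_filter, Finset.mem_univ, true_and] at hi1 hi2
    exact absurd hi2 (ne_of_lt hi1)
  rw [h2, Finset.card_union_of_disjoint h3, Finset.card_univ] at h1
  omega

end PendantAux

/-- deleting a pendant vertex together with its unique neighbor decreases
both inertia indices by exactly one and preserves the nullity. -/
theorem pendant_vertex_inertia {V : Type*} [Fintype V] [DecidableEq V] (Γ : SignedGraph V) (u v : V)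
    (huv : Γ.G.Adj u v) (hdeg : ∀ w : V, Γ.G.Adj u w → w = v) :
    Γ.posInertia = (Γ.inducedOn (Finset.univ \ {u, v})).posInertia + 1 ∧
      Γ.negInertia = (Γ.inducedOn (Finset.univ \ {u, v})).negInertia + 1 ∧
      Γ.nullity = (Γ.inducedOn (Finset.univ \ {u, v})).nullity := by
  classical
  have hne : u ≠ v := huv.ne
  have hsymm : ∀ a b, Γ.adjMatrix a b = Γ.adjMatrix b a := by
    intro a b
    by_cases h : Γ.G.Adj a b
    · have h' : Γ.G.Adj b a := h.symm
      simp [SignedGraph.adjMatrix, h, h', Γ.sign_symm a b]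
    · have h' : ¬ Γ.G.Adj b a := fun hh => h hh.symm
      simp [SignedGraph.adjMatrix, h, h']
  have hu0 : ∀ w, w ≠ v → Γ.adjMatrix u w = 0 := by
    intro w hw
    have h : ¬ Γ.G.Adj u w := fun h => hw (hdeg w h)
    simp [SignedGraph.adjMatrix, h]
  have hdiag : ∀ w, Γ.adjMatrix w w = 0 := by
    intro w
    simp [SignedGraph.adjMatrix, Γ.G.loopless.irrefl w]
  have hAuv : Γ.adjMatrix u v = Γ.sign u v := by simp [SignedGraph.adjMatrix, huv]
  have hsq : Γ.adjMatrix u v * Γ.adjMatrix u v = 1 := by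
    rcases Γ.sign_pm u v huv with h | h <;> rw [hAuv, h] <;> norm_num
  have hBmat : (Γ.inducedOn (Finset.univ \ {u, v})).adjMatrix
      = Γ.adjMatrix.submatrix ((↑) : {x // x ∈ PendantAux.del u v} → V)
          ((↑) : {x // x ∈ PendantAux.del u v} → V) := by
    ext a b
    by_cases h : Γ.G.Adj ↑a ↑b
    · simp [SignedGraph.adjMatrix, SignedGraph.inducedOn, Matrix.submatrix_apply, h]
    · simp [SignedGraph.adjMatrix, SignedGraph.inducedOn, Matrix.submatrix_apply, h]
  have hB' : (Γ.adjMatrix.submatrix ((↑) : {x // x ∈ PendantAux.del u v} → V)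
      ((↑) : {x // x ∈ PendantAux.del u v} → V)).IsHermitian :=
    hBmat ▸ (Γ.inducedOn (Finset.univ \ {u, v})).isHermitian
  have hEig := PendantAux.eigen_congr hBmat
    (Γ.inducedOn (Finset.univ \ {u, v})).isHermitian hB'
  have hp := PendantAux.inertia_step Γ.isHermitian hB' hne hsymm hu0 hsq
    (hdiag u) (hdiag v) 1 (Or.inl rfl)
  have hn := PendantAux.inertia_step Γ.isHermitian hB' hne hsymm hu0 hsq
    (hdiag u) (hdiag v) (-1) (Or.inr rfl)
  have hz := PendantAux.nullity_step Γ.isHermitian hB' hne hsymm hu0 hsq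
  have cA1 : (Finset.univ.filter fun i => 0 < (1:ℝ) * Γ.isHermitian.eigenvalues i).card
      = Γ.posInertia := by
    unfold SignedGraph.posInertia
    exact congrArg Finset.card (Finset.filter_congr fun i _ => by rw [one_mul])
  have cA2 : (Finset.univ.filter fun i => 0 < (-1:ℝ) * Γ.isHermitian.eigenvalues i).card
      = Γ.negInertia := by
    unfold SignedGraph.negInertia
    exact congrArg Finset.card (Finset.filter_congr fun i _ => by rw [neg_one_mul, neg_pos])
  have cB1 : (Finset.univ.filter fun i => 0 < (1:ℝ) * hB'.eigenvalues i).card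
      = (Γ.inducedOn (Finset.univ \ {u, v})).posInertia := by
    unfold SignedGraph.posInertia
    rw [← hEig]
    exact congrArg Finset.card (Finset.filter_congr fun i _ => by rw [one_mul])
  have cB2 : (Finset.univ.filter fun i => 0 < (-1:ℝ) * hB'.eigenvalues i).card
      = (Γ.inducedOn (Finset.univ \ {u, v})).negInertia := by
    unfold SignedGraph.negInertia
    rw [← hEig]
    exact congrArg Finset.card (Finset.filter_congr fun i _ => by rw [neg_one_mul, neg_pos])
  have cA0 : (Finset.univ.filter fun i => Γ.isHermitian.eigenvalues i = 0).card
      = Γ.nullity := rfl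
  have cB0 : (Finset.univ.filter fun i => hB'.eigenvalues i = 0).card
      = (Γ.inducedOn (Finset.univ \ {u, v})).nullity := by
    unfold SignedGraph.nullity
    rw [← hEig]
  rw [cA1, cB1] at hp
  rw [cA2, cB2] at hn
  rw [cA0, cB0] at hz
  have htotA : Γ.posInertia + Γ.negInertia + Γ.nullity = Fintype.card V :=
    PendantAux.count_partition Γ.isHermitian.eigenvalues
  have htotB : (Γ.inducedOn (Finset.univ \ {u, v})).posInertia
      + (Γ.inducedOn (Finset.univ \ {u, v})).negInertia
      + (Γ.inducedOn (Finset.univ \ {u, v})).nullity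
      = (Finset.univ \ ({u, v} : Finset V)).card := by
    have h := PendantAux.count_partition
      (Γ.inducedOn (Finset.univ \ {u, v})).isHermitian.eigenvalues
    rw [Fintype.card_coe] at h
    exact h
  have hcard2 : (Finset.univ \ ({u, v} : Finset V)).card + 2 = Fintype.card V := by
    have h5 : ({u, v} : Finset V).card = 2 := by
      rw [Finset.card_insert_of_notMem (by simp [hne]), Finset.card_singleton]
    have h6 := Finset.card_sdiff_add_card_eq_card (Finset.subset_univ ({u, v} : Finset V))
    rw [h5, Finset.card_univ] at h6
    exact h6
  refine ⟨?_, ?_, ?_⟩ <;> omega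
end

section
/- Let Γ be a connected signed graph with girth g (i.e., Γ contains a cycle and the shortest cycle has length g). Then i₋(Γ) ≥ ⌈g/2⌉ − 1. -/
open Matrix

section Helpers

open Matrix Finset


lemma quad_form_eq {n : Type*} [Fintype n] [DecidableEq n] {A : Matrix n n ℝ}
    (hA : A.IsHermitian) (x : n → ℝ) :
    x ⬝ᵥ A *ᵥ x = ∑ i, hA.eigenvalues i * ((star (hA.eigenvectorUnitary : Matrix n n ℝ) *ᵥ x) i)^2 := by
  have h2 : x ⬝ᵥ A *ᵥ x = (star (hA.eigenvectorUnitary : Matrix n n ℝ) *ᵥ x) ⬝ᵥ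
      (diagonal (RCLike.ofReal ∘ hA.eigenvalues) *ᵥ (star (hA.eigenvectorUnitary : Matrix n n ℝ) *ᵥ x)) := by
    conv_lhs => rw [hA.spectral_theorem, Unitary.conjStarAlgAut_apply]
    rw [← mulVec_mulVec, ← mulVec_mulVec, dotProduct_mulVec]
    congr 1
    rw [star_eq_conjTranspose, conjTranspose_eq_transpose_of_trivial, mulVec_transpose]
  rw [h2]
  simp only [dotProduct, mulVec_diagonal, Function.comp_apply, RCLike.ofReal_real_eq_id, id]
  apply Finset.sum_congr rfl
  intro i _
  ring

lemma neg_count_ge {n : Type*} [Fintype n] [DecidableEq n] {A : Matrix n n ℝ}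
    (hA : A.IsHermitian) {m : ℕ} (f : (Fin m → ℝ) →ₗ[ℝ] (n → ℝ))
    (hf : ∀ c, c ≠ 0 → f c ⬝ᵥ A *ᵥ f c < 0) :
    m ≤ (Finset.univ.filter fun i => hA.eigenvalues i < 0).card := by
  classical
  set U : Matrix n n ℝ := (hA.eigenvectorUnitary : Matrix n n ℝ) with hU
  set Φ : (Fin m → ℝ) →ₗ[ℝ] ({i // hA.eigenvalues i < 0} → ℝ) :=
    (LinearMap.funLeft ℝ ℝ Subtype.val).comp ((Matrix.mulVecLin (star U)).comp f) with hΦ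
  have hinj : Function.Injective Φ := by
    rw [← LinearMap.ker_eq_bot, LinearMap.ker_eq_bot']
    intro c hc
    by_contra hc0
    have hneg := hf c hc0
    rw [quad_form_eq hA] at hneg
    have hnn : (0:ℝ) ≤ ∑ i, hA.eigenvalues i * ((star U *ᵥ f c) i)^2 := by
      apply Finset.sum_nonneg
      intro i _
      by_cases hi : hA.eigenvalues i < 0
      · have h0 : (star U *ᵥ f c) i = 0 := congrFun hc ⟨i, hi⟩
        rw [h0]
        simp
      · push_neg at hi
        positivity
    rw [← hU] at hneg
    linarith
  have hle := LinearMap.finrank_le_finrank_of_injective hinj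
  rw [Module.finrank_fintype_fun_eq_card, Module.finrank_fintype_fun_eq_card,
    Fintype.card_fin, Fintype.card_subtype] at hle
  exact hle


lemma sq_identity (m : ℕ) (c : ℕ → ℝ) :
    2 * (∑ i ∈ range (m+1), (c i)^2 + ∑ i ∈ range m, c i * c (i+1))
      = (c 0)^2 + (c m)^2 + ∑ i ∈ range m, (c i + c (i+1))^2 := by
  induction m with
  | zero => simp; ring
  | succ k ih =>
    rw [Finset.sum_range_succ (fun i => (c i)^2), Finset.sum_range_succ (fun i => c i * c (i+1)),
      Finset.sum_range_succ (fun i => (c i + c (i+1))^2)]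
    nlinarith [ih]

lemma path_form_pos (m : ℕ) (c : ℕ → ℝ) (h : ∃ i ≤ m, c i ≠ 0) :
    0 < ∑ i ∈ range (m+1), (c i)^2 + ∑ i ∈ range m, c i * c (i+1) := by
  set S := ∑ i ∈ range (m+1), (c i)^2 + ∑ i ∈ range m, c i * c (i+1) with hS
  by_contra hle
  push_neg at hle
  have hid := sq_identity m c
  have hsumnn : (0:ℝ) ≤ ∑ i ∈ range m, (c i + c (i+1))^2 :=
    Finset.sum_nonneg fun i _ => sq_nonneg _
  have hc0 : c 0 = 0 := by nlinarith
  have hall : ∀ i ∈ range m, (c i + c (i+1))^2 = 0 := by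
    rw [← Finset.sum_eq_zero_iff_of_nonneg (fun i _ => sq_nonneg _)]
    nlinarith
  have hzero : ∀ i ≤ m, c i = 0 := by
    intro i hi
    induction i with
    | zero => exact hc0
    | succ j ihj =>
      have hj : c j = 0 := ihj (by omega)
      have := hall j (Finset.mem_range.mpr (by omega))
      have : c j + c (j+1) = 0 := by
        exact pow_eq_zero_iff (n := 2) (by norm_num) |>.mp this
      linarith
  obtain ⟨i, hi, hne⟩ := h
  exact hne (hzero i hi)

lemma split_sum (m : ℕ) (c : ℕ → ℝ) :
    ∑ j ∈ range (2*m+1), c (j/2) * c ((j+1)/2)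
      = ∑ i ∈ range (m+1), (c i)^2 + ∑ i ∈ range m, c i * c (i+1) := by
  induction m with
  | zero => simp; ring
  | succ k ih =>
    have h1 : 2*(k+1)+1 = (2*k+1) + 1 + 1 := by ring
    rw [h1, Finset.sum_range_succ, Finset.sum_range_succ, ih,
      Finset.sum_range_succ (fun i => (c i)^2), Finset.sum_range_succ (fun i => c i * c (i+1))]
    have e1 : (2*k+1)/2 = k := by omega
    have e2 : (2*k+1+1)/2 = k+1 := by omega
    have e3 : (2*k+1+1+1)/2 = k+1 := by omega
    rw [e1, e2, e3, Finset.sum_range_succ (fun i => (c i)^2) (k+1), Finset.sum_range_succ (fun i => (c i)^2) k]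
    ring




namespace SimpleGraph
namespace Walk

variable {V : Type*} {G : SimpleGraph V}

lemma getVert_injOn_of_cycle {u : V} {w : G.Walk u u} (hw : w.IsCycle)
    {a b : ℕ} (ha1 : 1 ≤ a) (ha2 : a ≤ w.length) (hb1 : 1 ≤ b) (hb2 : b ≤ w.length)
    (hab : w.getVert a = w.getVert b) : a = b := by
  have hnd : w.support.tail.Nodup := hw.2
  have hlen : w.support.length = w.length + 1 := by simp [length_support]
  have hlt : w.support.tail.length = w.length := by
    rw [List.length_tail, hlen]; omega
  have hga : w.support.tail[a-1]'(by omega) = w.getVert a := by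
    rw [List.getElem_tail]
    rw [getVert_eq_support_getElem _ (by omega)]
    congr 1; omega
  have hgb : w.support.tail[b-1]'(by omega) = w.getVert b := by
    rw [List.getElem_tail]
    rw [getVert_eq_support_getElem _ (by omega)]
    congr 1; omega
  have heq : w.support.tail[a-1]'(by omega) = w.support.tail[b-1]'(by omega) := by
    rw [hga, hgb, hab]
  have := (hnd.getElem_inj_iff).mp heq
  omega

/-- Segment of a walk from `getVert i` to `getVert (i+j)`. -/
def seg {u v : V} (w : G.Walk u v) (i : ℕ) : (j : ℕ) → i + j ≤ w.length →
    G.Walk (w.getVert i) (w.getVert (i + j))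
  | 0, _ => Walk.nil
  | (j+1), h => (seg w i j (by omega)).concat
      (w.adj_getVert_succ (by omega : i + j < w.length))

@[simp] lemma seg_length {u v : V} (w : G.Walk u v) (i j : ℕ) (h : i + j ≤ w.length) :
    (w.seg i j h).length = j := by
  induction j with
  | zero => rfl
  | succ k ih => simp [seg, length_concat, ih]

lemma seg_support {u v : V} (w : G.Walk u v) (i j : ℕ) (h : i + j ≤ w.length) :
    (w.seg i j h).support = (List.range (j+1)).map (fun t => w.getVert (i + t)) := by
  induction j with
  | zero => simp [seg, List.range_succ]
  | succ k ih =>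
    rw [seg, support_concat, ih (by omega), List.range_succ (n := k+1)]
    simp

lemma seg_edges {u v : V} (w : G.Walk u v) (i j : ℕ) (h : i + j ≤ w.length) :
    (w.seg i j h).edges = (List.range j).map (fun t => s(w.getVert (i + t), w.getVert (i + t + 1))) := by
  induction j with
  | zero => simp [seg]
  | succ k ih =>
    rw [seg, edges_concat, ih (by omega), List.range_succ (n := k)]
    simp [List.concat_eq_append, Nat.add_assoc]

end Walk
end SimpleGraph

namespace SimpleGraph

variable {V : Type*} {G : SimpleGraph V}

lemma no_chord {u : V} {w : G.Walk u u} (hw : w.IsCycle) (hg : G.egirth = w.length)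
    {a b : ℕ} (ha : 1 ≤ a) (hab : a + 2 ≤ b) (hb : b + 1 ≤ w.length)
    (hadj : G.Adj (w.getVert a) (w.getVert b)) : False := by
  have hba : a + (b - a) = b := by omega
  have hseg : a + (b - a) ≤ w.length := by omega
  set seg' : G.Walk (w.getVert a) (w.getVert b) :=
    (w.seg a (b-a) hseg).copy rfl (by rw [hba]) with hseg'
  have hsup : seg'.support = (List.range (b-a+1)).map (fun t => w.getVert (a + t)) := by
    rw [hseg', Walk.support_copy, Walk.seg_support]
  have hedg : seg'.edges = (List.range (b-a)).map
      (fun t => s(w.getVert (a + t), w.getVert (a + t + 1))) := by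
    rw [hseg', Walk.edges_copy, Walk.seg_edges]
  have hpath : seg'.IsPath := by
    rw [Walk.isPath_def, hsup]
    apply List.Nodup.map_on _ List.nodup_range
    intro x hx y hy hxy
    rw [List.mem_range] at hx hy
    have := Walk.getVert_injOn_of_cycle hw (a := a + x) (b := a + y)
      (by omega) (by omega) (by omega) (by omega) hxy
    omega
  have hnotmem : s(w.getVert b, w.getVert a) ∉ seg'.edges := by
    rw [hedg]
    intro hmem
    rw [List.mem_map] at hmem
    obtain ⟨t, ht, hteq⟩ := hmem
    rw [List.mem_range] at ht
    rw [Sym2.eq_iff] at hteq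
    rcases hteq with ⟨h1, h2⟩ | ⟨h1, h2⟩
    · have := Walk.getVert_injOn_of_cycle hw (a := a + t) (b := b)
        (by omega) (by omega) (by omega) (by omega) h1
      omega
    · have e1 := Walk.getVert_injOn_of_cycle hw (a := a + t + 1) (b := b)
        (by omega) (by omega) (by omega) (by omega) h2
      have e2 := Walk.getVert_injOn_of_cycle hw (a := a + t) (b := a)
        (by omega) (by omega) (by omega) (by omega) h1
      omega
  have hcyc : (Walk.cons hadj.symm seg').IsCycle :=
    (Walk.cons_isCycle_iff seg' hadj.symm).mpr ⟨hpath, hnotmem⟩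
  have hle : G.egirth ≤ (Walk.cons hadj.symm seg').length :=
    le_egirth.mp le_rfl _ _ hcyc
  rw [hg] at hle
  have hlen : (Walk.cons hadj.symm seg').length = (b - a) + 1 := by
    rw [Walk.length_cons, hseg', Walk.length_copy, Walk.seg_length]
  rw [hlen] at hle
  have : w.length ≤ b - a + 1 := by exact_mod_cast hle
  omega

end SimpleGraph


end Helpers

namespace SignedGraph

open Matrix Finset

variable {V : Type*} [Fintype V] [DecidableEq V]

open scoped Classical

-- the quadratic-form negativity construction
lemma exists_negdef (Γ : SignedGraph V) {m : ℕ} (hm : 1 ≤ m) (p : ℕ → V)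
    (hpinj : ∀ j k, j < 2*m → k < 2*m → p j = p k → j = k)
    (hpadj : ∀ j, j + 1 < 2*m → Γ.G.Adj (p j) (p (j+1)))
    (hpnon : ∀ j k, j < 2*m → k < 2*m → j + 2 ≤ k → ¬ Γ.G.Adj (p j) (p k)) :
    ∃ f : (Fin m → ℝ) →ₗ[ℝ] (V → ℝ),
      ∀ c, c ≠ 0 → f c ⬝ᵥ Γ.adjMatrix *ᵥ f c < 0 := by
  classical
  set n := 2*m with hn
  -- the extension of c : Fin m → ℝ to ℕ → ℝ
  set cc : (Fin m → ℝ) → ℕ → ℝ := fun c i => if h : i < m then c ⟨i, h⟩ else 0 with hcc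
  have cc_add : ∀ c₁ c₂ i, cc (c₁ + c₂) i = cc c₁ i + cc c₂ i := by
    intro c₁ c₂ i
    by_cases h : i < m <;> simp [hcc, h]
  have cc_smul : ∀ (r : ℝ) c i, cc (r • c) i = r * cc c i := by
    intro r c i
    by_cases h : i < m <;> simp [hcc, h]
  -- the alternating signs
  set d : ℕ → ℝ := fun j => Nat.rec (1:ℝ) (fun i r => -(Γ.sign (p i) (p (i+1))) * r) j with hd
  have hd0 : d 0 = 1 := rfl
  have hds : ∀ j, d (j+1) = -(Γ.sign (p j) (p (j+1))) * d j := fun j => rfl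
  have hdsq : ∀ j, j < n → d j * d j = 1 := by
    intro j
    induction j with
    | zero => intro _; simp [hd0]
    | succ i ih =>
      intro hi
      have hadj := hpadj i (by omega)
      have hsq : Γ.sign (p i) (p (i+1)) * Γ.sign (p i) (p (i+1)) = 1 := by
        rcases Γ.sign_pm _ _ hadj with h | h <;> rw [h] <;> norm_num
      rw [hds]
      have := ih (by omega)
      nlinarith
  have hdprod : ∀ j, j + 1 < n → Γ.sign (p j) (p (j+1)) * (d j * d (j+1)) = -1 := by
    intro j hj
    have hadj := hpadj j hj
    have hsq : Γ.sign (p j) (p (j+1)) * Γ.sign (p j) (p (j+1)) = 1 := by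
      rcases Γ.sign_pm _ _ hadj with h | h <;> rw [h] <;> norm_num
    rw [hds]
    have := hdsq j (by omega)
    nlinarith
  -- the linear map
  set F : (Fin m → ℝ) → (V → ℝ) :=
    fun c v => ∑ j ∈ range n, (if v = p j then d j * cc c (j/2) else 0) with hF
  set f : (Fin m → ℝ) →ₗ[ℝ] (V → ℝ) :=
    { toFun := F
      map_add' := by
        intro c₁ c₂
        funext v
        rw [hF]
        simp only [Pi.add_apply]
        rw [← Finset.sum_add_distrib]
        apply Finset.sum_congr rfl
        intro j _
        by_cases hv : v = p j
        · simp [hv, cc_add, mul_add]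
        · simp [hv]
      map_smul' := by
        intro r c
        funext v
        show F (r • c) v = ((RingHom.id ℝ) r • F c) v
        rw [hF]
        simp only [RingHom.id_apply, Pi.smul_apply, smul_eq_mul]
        rw [Finset.mul_sum]
        apply Finset.sum_congr rfl
        intro j _
        by_cases hv : v = p j
        · simp [hv, cc_smul]; ring
        · simp [hv] } with hf
  refine ⟨f, ?_⟩
  intro c hc
  -- key evaluation : sum against any h
  have hstep : ∀ h : V → ℝ, ∑ v, F c v * h v
      = ∑ j ∈ range n, (d j * cc c (j/2)) * h (p j) := by
    intro h
    rw [hF]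
    simp only [Finset.sum_mul]
    rw [Finset.sum_comm]
    apply Finset.sum_congr rfl
    intro j _
    simp only [ite_mul, zero_mul]
    rw [Finset.sum_ite_eq' univ (p j)]
    simp
  -- matrix entries
  have hAe : ∀ j k, j < n → k < n → Γ.adjMatrix (p j) (p k)
      = (if k = j+1 then Γ.sign (p j) (p (j+1)) else 0)
        + (if j = k+1 then Γ.sign (p (k+1)) (p k) else 0) := by
    intro j k hj hk
    by_cases hk1 : k = j + 1
    · subst hk1
      have hadj := hpadj j hk
      rw [if_pos rfl, if_neg (by omega)]
      simp [adjMatrix, hadj]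
    · by_cases hj1 : j = k + 1
      · subst hj1
        have hadj := (hpadj k hj).symm
        rw [if_neg hk1, if_pos rfl]
        simp [adjMatrix, hadj]
      · rw [if_neg hk1, if_neg hj1]
        have hnadj : ¬ Γ.G.Adj (p j) (p k) := by
          rcases lt_trichotomy j k with h | h | h
          · exact hpnon j k hj hk (by omega)
          · subst h; simp
          · intro hadj
            exact hpnon k j hk hj (by omega) hadj.symm
        simp [adjMatrix, hnadj]
  -- the quadratic form as a double sum
  have hQ : F c ⬝ᵥ Γ.adjMatrix *ᵥ F c
      = ∑ j ∈ range n, ∑ k ∈ range n,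
          (d j * cc c (j/2)) * ((d k * cc c (k/2)) * Γ.adjMatrix (p j) (p k)) := by
    rw [show F c ⬝ᵥ Γ.adjMatrix *ᵥ F c = ∑ v, F c v * (Γ.adjMatrix *ᵥ F c) v from rfl]
    rw [hstep]
    apply Finset.sum_congr rfl
    intro j _
    have hin : (Γ.adjMatrix *ᵥ F c) (p j)
        = ∑ k ∈ range n, (d k * cc c (k/2)) * Γ.adjMatrix (p j) (p k) := by
      show ∑ u, Γ.adjMatrix (p j) u * F c u = _
      rw [show (∑ u, Γ.adjMatrix (p j) u * F c u)
          = ∑ u, F c u * Γ.adjMatrix (p j) u from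
        Finset.sum_congr rfl (fun u _ => mul_comm _ _)]
      exact hstep (fun u => Γ.adjMatrix (p j) u)
    rw [hin, Finset.mul_sum]
  -- substitute entries and split
  have hQ2 : F c ⬝ᵥ Γ.adjMatrix *ᵥ F c
      = (∑ j ∈ range n, ∑ k ∈ range n,
          (if k = j+1 then (d j * cc c (j/2)) * ((d k * cc c (k/2)) * Γ.sign (p j) (p (j+1))) else 0))
        + (∑ j ∈ range n, ∑ k ∈ range n,
          (if j = k+1 then (d j * cc c (j/2)) * ((d k * cc c (k/2)) * Γ.sign (p (k+1)) (p k)) else 0)) := by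
    rw [hQ, ← Finset.sum_add_distrib]
    apply Finset.sum_congr rfl
    intro j hj
    rw [← Finset.sum_add_distrib]
    apply Finset.sum_congr rfl
    intro k hk
    rw [hAe j k (mem_range.mp hj) (mem_range.mp hk)]
    by_cases hk1 : k = j+1
    · rw [if_pos hk1, if_pos hk1, if_neg (show ¬ j = k+1 by omega), if_neg (show ¬ j = k+1 by omega)]
      subst hk1; ring
    · by_cases hj1 : j = k+1
      · rw [if_neg hk1, if_neg hk1, if_pos hj1, if_pos hj1]
        subst hj1; ring
      · rw [if_neg hk1, if_neg hk1, if_neg hj1, if_neg hj1]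
        ring
  have hT1 : (∑ j ∈ range n, ∑ k ∈ range n,
        (if k = j+1 then (d j * cc c (j/2)) * ((d k * cc c (k/2)) * Γ.sign (p j) (p (j+1))) else 0))
      = ∑ j ∈ range (n-1),
          (d j * cc c (j/2)) * ((d (j+1) * cc c ((j+1)/2)) * Γ.sign (p j) (p (j+1))) := by
    have h1 : ∀ j ∈ range n, (∑ k ∈ range n,
        (if k = j+1 then (d j * cc c (j/2)) * ((d k * cc c (k/2)) * Γ.sign (p j) (p (j+1))) else 0))
        = if j+1 ∈ range n then (d j * cc c (j/2)) * ((d (j+1) * cc c ((j+1)/2)) * Γ.sign (p j) (p (j+1))) else 0 := by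
      intro j _
      rw [Finset.sum_ite_eq' (range n) (j+1)]
    rw [Finset.sum_congr rfl h1]
    have hn2 : n = (n-1) + 1 := by omega
    rw [hn2, Finset.sum_range_succ]
    rw [if_neg (by rw [← hn2]; simp)]
    rw [add_zero]
    apply Finset.sum_congr rfl
    intro j hj
    rw [if_pos (by rw [← hn2]; rw [mem_range] at *; omega)]
  have hT2 : (∑ j ∈ range n, ∑ k ∈ range n,
        (if j = k+1 then (d j * cc c (j/2)) * ((d k * cc c (k/2)) * Γ.sign (p (k+1)) (p k)) else 0))
      = ∑ k ∈ range (n-1),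
          (d (k+1) * cc c ((k+1)/2)) * ((d k * cc c (k/2)) * Γ.sign (p (k+1)) (p k)) := by
    rw [Finset.sum_comm]
    have h1 : ∀ k ∈ range n, (∑ j ∈ range n,
        (if j = k+1 then (d j * cc c (j/2)) * ((d k * cc c (k/2)) * Γ.sign (p (k+1)) (p k)) else 0))
        = if k+1 ∈ range n then (d (k+1) * cc c ((k+1)/2)) * ((d k * cc c (k/2)) * Γ.sign (p (k+1)) (p k)) else 0 := by
      intro k _
      rw [Finset.sum_ite_eq' (range n) (k+1)]
    rw [Finset.sum_congr rfl h1]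
    have hn2 : n = (n-1) + 1 := by omega
    rw [hn2, Finset.sum_range_succ]
    rw [if_neg (by rw [← hn2]; simp)]
    rw [add_zero]
    apply Finset.sum_congr rfl
    intro k hk
    rw [if_pos (by rw [← hn2]; rw [mem_range] at *; omega)]
  have hQ3 : F c ⬝ᵥ Γ.adjMatrix *ᵥ F c
      = -2 * ∑ j ∈ range (n-1), cc c (j/2) * cc c ((j+1)/2) := by
    rw [hQ2, hT1, hT2, ← Finset.sum_add_distrib, Finset.mul_sum]
    apply Finset.sum_congr rfl
    intro j hj
    rw [mem_range] at hj
    have hp := hdprod j (by omega)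
    rw [Γ.sign_symm (p (j+1)) (p j)]
    linear_combination (2 * cc c (j/2) * cc c ((j+1)/2)) * hp
  -- conclude negativity
  have hsplit : ∑ j ∈ range (n-1), cc c (j/2) * cc c ((j+1)/2)
      = ∑ i ∈ range ((m-1)+1), (cc c i)^2 + ∑ i ∈ range (m-1), cc c i * cc c (i+1) := by
    have : n - 1 = 2*(m-1)+1 := by omega
    rw [this]
    exact split_sum (m-1) (cc c)
  have hpos : 0 < ∑ i ∈ range ((m-1)+1), (cc c i)^2 + ∑ i ∈ range (m-1), cc c i * cc c (i+1) := by
    apply path_form_pos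
    obtain ⟨i0, hi0⟩ := Function.ne_iff.mp hc
    refine ⟨i0, by omega, ?_⟩
    have : cc c (i0 : ℕ) = c i0 := by
      rw [hcc]
      simp [i0.isLt]
    rw [this]
    simpa using hi0
  have : f c ⬝ᵥ Γ.adjMatrix *ᵥ f c = F c ⬝ᵥ Γ.adjMatrix *ᵥ F c := rfl
  rw [this, hQ3, hsplit]
  nlinarith


end SignedGraph

open Matrix Finset in
/-- for a connected signed graph of girth `g`, `i₋(Γ) ≥ ⌈g/2⌉ - 1`. -/
theorem negInertia_ge_of_girth {V : Type*} [Fintype V] [DecidableEq V] (Γ : SignedGraph V)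
    (hconn : Γ.G.Connected) (g : ℕ) (hg : Γ.G.egirth = g) :
    (g + 1) / 2 - 1 ≤ Γ.negInertia := by
  classical
  have hg3 : 3 ≤ g := by
    have h3 := Γ.G.three_le_egirth
    rw [hg] at h3
    exact_mod_cast h3
  set m := (g+1)/2 - 1 with hm
  have hm1 : 1 ≤ m := by omega
  have h2m : 2*m + 1 ≤ g := by omega
  have hnac : ¬ Γ.G.IsAcyclic := by
    intro hac
    have h := SimpleGraph.egirth_eq_top.mpr hac
    rw [hg] at h
    exact (ENat.coe_ne_top g) h
  obtain ⟨a, w, hwc, hwl⟩ := SimpleGraph.exists_egirth_eq_length.mpr hnac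
  have hlen : w.length = g := by
    rw [hwl] at hg
    have : w.length = g := by exact_mod_cast hg
    omega
  set p : ℕ → V := fun j => w.getVert (j+1) with hp
  have hpadj : ∀ j, j + 1 < 2*m → Γ.G.Adj (p j) (p (j+1)) := by
    intro j hj
    exact w.adj_getVert_succ (i := j+1) (by omega : j+1 < w.length)
  have hpinj : ∀ j k, j < 2*m → k < 2*m → p j = p k → j = k := by
    intro j k hj hk hjk
    have := SimpleGraph.Walk.getVert_injOn_of_cycle hwc (a := j+1) (b := k+1)
      (by omega) (by omega) (by omega) (by omega) hjk
    omega
  have hpnon : ∀ j k, j < 2*m → k < 2*m → j + 2 ≤ k → ¬ Γ.G.Adj (p j) (p k) := by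
    intro j k hj hk hjk hadj
    exact SimpleGraph.no_chord hwc (by rw [hlen]; exact hg) (a := j+1) (b := k+1)
      (by omega) (by omega) (by omega) hadj
  obtain ⟨f, hf⟩ := Γ.exists_negdef hm1 p hpinj hpadj hpnon
  have hfinal := neg_count_ge Γ.isHermitian f hf
  unfold SignedGraph.negInertia
  exact hfinal
end

section
/- Let Γ be a connected signed graph with girth g (i.e., Γ contains a cycle and the shortest cycle has length g). Then i₊(Γ) ≥ ⌈g/2⌉ − 1. -/
open Matrix

section Auxiliary

open Matrix SimpleGraph

variable {V : Type*} {G : SimpleGraph V}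

/-- A walk along a chain of adjacent vertices. -/
def chainWalk (G : SimpleGraph V) (f : ℕ → V) :
    ∀ n, (∀ k, k < n → G.Adj (f k) (f (k+1))) → G.Walk (f 0) (f n)
  | 0, _ => .nil
  | (n+1), h =>
      (chainWalk G f n (fun k hk => h k (hk.trans (Nat.lt_succ_self n)))).concat
        (h n (Nat.lt_succ_self n))

lemma chainWalk_length (f : ℕ → V) :
    ∀ n (h : ∀ k, k < n → G.Adj (f k) (f (k+1))), (chainWalk G f n h).length = n
  | 0, _ => rfl
  | (n+1), h => by
      rw [chainWalk, Walk.length_concat, chainWalk_length f n]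

lemma chainWalk_support (f : ℕ → V) :
    ∀ n (h : ∀ k, k < n → G.Adj (f k) (f (k+1))),
      (chainWalk G f n h).support = (List.range (n+1)).map f
  | 0, _ => rfl
  | (n+1), h => by
      rw [chainWalk, Walk.support_concat, chainWalk_support f n,
        List.range_succ (n := n+1), List.map_append]
      rfl

lemma chainWalk_edges (f : ℕ → V) :
    ∀ n (h : ∀ k, k < n → G.Adj (f k) (f (k+1))),
      (chainWalk G f n h).edges = (List.range n).map (fun k => s(f k, f (k+1)))
  | 0, _ => rfl
  | (n+1), h => by
      rw [chainWalk, Walk.edges_concat, chainWalk_edges f n,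
        List.range_succ, List.map_append, List.concat_eq_append]
      rfl

lemma egirth_le_length {a : V} {w : G.Walk a a} (h : w.IsCycle) :
    G.egirth ≤ w.length := by
  rw [SimpleGraph.egirth]
  exact iInf_le_of_le a (iInf_le_of_le w (iInf_le_of_le h le_rfl))

lemma walk_support_eq_map : ∀ {u v : V} (p : G.Walk u v),
    p.support = (List.range (p.length+1)).map p.getVert
  | _, _, .nil => rfl
  | u, v, .cons h q => by
      rw [Walk.support_cons, walk_support_eq_map q, Walk.length_cons,
        List.range_succ_eq_map (n := q.length + 1), List.map_cons]
      rw [List.map_map]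
      rfl

lemma cycle_getVert_injOn {u : V} {w : G.Walk u u} (hc : w.IsCycle) {i j : ℕ}
    (hi : i < w.length) (hj : j < w.length) (h : w.getVert i = w.getVert j) : i = j := by
  have hnd : w.support.tail.Nodup := hc.support_nodup
  have hsupp : w.support.tail = (List.range w.length).map (fun k => w.getVert (k+1)) := by
    rw [walk_support_eq_map, List.range_succ_eq_map, List.map_cons, List.tail_cons, List.map_map]
    rfl
  rw [hsupp] at hnd
  have hinj := (List.nodup_map_iff_inj_on List.nodup_range).mp hnd
  have key : ∀ a b, a < w.length → b < w.length →
      w.getVert (a+1) = w.getVert (b+1) → a = b := by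
    intro a b ha hb hab
    exact hinj a (List.mem_range.mpr ha) b (List.mem_range.mpr hb) hab
  have h0 : w.getVert 0 = w.getVert w.length := by
    rw [Walk.getVert_zero, Walk.getVert_length]
  have hlen : 3 ≤ w.length := hc.three_le_length
  have key' : ∀ a b, 1 ≤ a → a ≤ w.length → 1 ≤ b → b ≤ w.length →
      w.getVert a = w.getVert b → a = b := by
    intro a b ha1 ha2 hb1 hb2 hab
    have h1 : a - 1 + 1 = a := by omega
    have h2 : b - 1 + 1 = b := by omega
    have := key (a-1) (b-1) (by omega) (by omega) (by rw [h1, h2]; exact hab)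
    omega
  rcases Nat.eq_zero_or_pos i with rfl | hi0
  · rcases Nat.eq_zero_or_pos j with rfl | hj0
    · rfl
    · rw [h0] at h
      have := key' w.length j (by omega) le_rfl hj0 hj.le h
      omega
  · rcases Nat.eq_zero_or_pos j with rfl | hj0
    · rw [h0] at h
      have := key' i w.length hi0 hi.le (by omega) le_rfl h
      omega
    · exact key' i j hi0 hi.le hj0 hj.le h

lemma cycle_no_chord {u : V} {w : G.Walk u u} (hc : w.IsCycle) (hg : G.egirth = w.length)
    {i j : ℕ} (hij : i < j) (hj : j ≤ w.length - 2)
    (hadj : G.Adj (w.getVert i) (w.getVert j)) : j = i + 1 := by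
  by_contra hne
  have hlen3 : 3 ≤ w.length := hc.three_le_length
  have hd2 : i + 2 ≤ j := by omega
  set d := j - i with hd
  set f : ℕ → V := fun k => w.getVert (i + k) with hf
  have hchain : ∀ k, k < d → G.Adj (f k) (f (k+1)) := by
    intro k hk
    have h1 : f k = w.getVert (i+k) := rfl
    have h2' : f (k+1) = w.getVert ((i+k)+1) := rfl
    rw [h1, h2']
    exact w.adj_getVert_succ (by omega)
  set p := chainWalk G f d hchain with hp
  have hfd : f d = w.getVert j := by
    show w.getVert (i + d) = _
    congr 1
    omega
  have hf0 : f 0 = w.getVert i := rfl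
  have h2 : G.Adj (f d) (f 0) := by rw [hfd, hf0]; exact hadj.symm
  have hinj : ∀ a b, a ≤ d → b ≤ d → f a = f b → a = b := by
    intro a b ha hb hab
    have := cycle_getVert_injOn hc (i := i + a) (j := i + b) (by omega) (by omega) hab
    omega
  have hpath : p.IsPath := by
    rw [Walk.isPath_def, hp, chainWalk_support]
    refine (List.nodup_map_iff_inj_on List.nodup_range).mpr ?_
    intro a ha b hb hab
    exact hinj a b (by simpa using Nat.lt_succ_iff.mp (List.mem_range.mp ha))
      (Nat.lt_succ_iff.mp (List.mem_range.mp hb)) hab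
  have hedge : s(f d, f 0) ∉ p.edges := by
    rw [hp, chainWalk_edges]
    intro hmem
    obtain ⟨k, hk, hkeq⟩ := List.mem_map.mp hmem
    have hk' : k < d := List.mem_range.mp hk
    rw [Sym2.eq_iff] at hkeq
    rcases hkeq with ⟨h1, _⟩ | ⟨h1, h2'⟩
    · have := hinj k d hk'.le le_rfl h1
      omega
    · have e1 := hinj k 0 hk'.le (by omega) h1
      have e2 := hinj (k+1) d (by omega) le_rfl h2'
      omega
  have hcyc : (Walk.cons h2 p).IsCycle :=
    (Walk.cons_isCycle_iff p h2).mpr ⟨hpath, hedge⟩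
  have hle := _root_.egirth_le_length hcyc
  rw [hg] at hle
  have : (Walk.cons h2 p).length = d + 1 := by
    rw [Walk.length_cons, hp, chainWalk_length]
  rw [this] at hle
  have : w.length ≤ d + 1 := by exact_mod_cast hle
  omega

lemma sum_halves_aux (d : ℕ → ℝ) : ∀ n : ℕ,
    ∑ k ∈ Finset.range (2*n), d (k/2) * d ((k+1)/2)
      = ∑ i ∈ Finset.range n, (d i^2 + d i * d (i+1))
  | 0 => by simp
  | (n+1) => by
      have h1 : 2*(n+1) = (2*n + 1) + 1 := by ring
      rw [h1, Finset.sum_range_succ, Finset.sum_range_succ, sum_halves_aux d n,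
        Finset.sum_range_succ]
      have e1 : (2*n)/2 = n := by omega
      have e2 : (2*n+1)/2 = n := by omega
      have e3 : (2*n+1+1)/2 = n+1 := by omega
      rw [e1, e2, e3]
      ring

lemma two_mul_sum_aux (d : ℕ → ℝ) : ∀ n : ℕ,
    2 * ∑ i ∈ Finset.range n, (d i^2 + d i * d (i+1))
      = d 0^2 - d n^2 + ∑ i ∈ Finset.range n, (d i + d (i+1))^2
  | 0 => by simp
  | (n+1) => by
      rw [Finset.sum_range_succ, Finset.sum_range_succ, mul_add, two_mul_sum_aux d n]
      ring

lemma pos_sum_aux (d : ℕ → ℝ) (m : ℕ) (hm : d m = 0) (hne : ∃ i, i < m ∧ d i ≠ 0) :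
    0 < ∑ i ∈ Finset.range m, (d i^2 + d i * d (i+1)) := by
  have hid := two_mul_sum_aux d m
  rw [hm] at hid
  have hT : 0 ≤ ∑ i ∈ Finset.range m, (d i + d (i+1))^2 :=
    Finset.sum_nonneg fun i _ => sq_nonneg _
  have hge : 0 ≤ ∑ i ∈ Finset.range m, (d i^2 + d i * d (i+1)) := by
    nlinarith [sq_nonneg (d 0)]
  rcases hge.lt_or_eq with h | h
  · exact h
  · exfalso
    rw [← h] at hid
    have hd0 : d 0 = 0 := by nlinarith [sq_nonneg (d 0)]
    have hTz : (∑ i ∈ Finset.range m, (d i + d (i+1))^2) = 0 := by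
      nlinarith [sq_nonneg (d 0)]
    have hsq : ∀ i ∈ Finset.range m, (d i + d (i+1))^2 = 0 :=
      (Finset.sum_eq_zero_iff_of_nonneg (fun i _ => sq_nonneg _)).mp hTz
    have hstep : ∀ i, i < m → d i = 0 := by
      intro i
      induction i with
      | zero => intro _; exact hd0
      | succ n ih =>
        intro hn
        have h1 := hsq n (Finset.mem_range.mpr (by omega))
        have h2 := ih (by omega)
        have h3 : d n + d (n+1) = 0 := by
          have := sq_eq_zero_iff.mp h1
          exact this
        linarith
    obtain ⟨i, hi, hdi⟩ := hne
    exact hdi (hstep i hi)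

open scoped Classical in
lemma posInertia_aux {V : Type*} [Fintype V] [DecidableEq V] (Γ : SignedGraph V)
    {m : ℕ} (φ : (Fin m → ℝ) →ₗ[ℝ] (V → ℝ))
    (hinj : Function.Injective φ)
    (hpos : ∀ c, c ≠ 0 → 0 < φ c ⬝ᵥ (Γ.adjMatrix *ᵥ φ c)) :
    m ≤ Γ.posInertia := by
  classical
  unfold SignedGraph.posInertia
  set hA := Γ.isHermitian with hhA
  set U : Matrix V V ℝ := (hA.eigenvectorUnitary : Matrix V V ℝ) with hU
  set lam := hA.eigenvalues with hlam
  set P : Finset V := Finset.univ.filter fun i => 0 < lam i with hP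
  show m ≤ P.card
  have hq : ∀ x : V → ℝ, x ⬝ᵥ (Γ.adjMatrix *ᵥ x) = ∑ i, lam i * ((star U *ᵥ x) i)^2 := by
    intro x
    conv_lhs => rw [hA.spectral_theorem, Unitary.conjStarAlgAut_apply]
    rw [← mulVec_mulVec, ← mulVec_mulVec, dotProduct_mulVec]
    have hxy : x ᵥ* U = star U *ᵥ x := by
      ext i
      simp [vecMul, mulVec, dotProduct, mul_comm]
    rw [hxy]
    simp [dotProduct, mulVec_diagonal, RCLike.ofReal_real_eq_id]
    ring_nf
    exact Finset.sum_congr rfl fun i _ => by ring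
  set L : (V → ℝ) →ₗ[ℝ] ({i // i ∈ P} → ℝ) :=
    (LinearMap.funLeft ℝ ℝ (fun i : {i // i ∈ P} => (i : V))).comp (star U).mulVecLin with hL
  by_contra hcon
  push_neg at hcon
  have h1 : Module.finrank ℝ (LinearMap.range φ) = m := by
    rw [LinearMap.finrank_range_of_inj hinj]; simp
  have h2 : Fintype.card V ≤ Module.finrank ℝ (LinearMap.ker L) + P.card := by
    have := L.finrank_range_add_finrank_ker
    have hle : Module.finrank ℝ (LinearMap.range L) ≤ P.card := by
      have := Submodule.finrank_le (LinearMap.range L)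
      simpa using this.trans_eq (by simp [Module.finrank_pi])
    have hV : Module.finrank ℝ (V → ℝ) = Fintype.card V := by simp [Module.finrank_pi]
    omega
  have hinter : ∃ x : V → ℝ, x ≠ 0 ∧ x ∈ LinearMap.range φ ∧ x ∈ LinearMap.ker L := by
    have hsum := Submodule.finrank_sup_add_finrank_inf_eq (LinearMap.range φ) (LinearMap.ker L)
    have hsup : Module.finrank ℝ ((LinearMap.range φ) ⊔ (LinearMap.ker L) :
        Submodule ℝ (V → ℝ)) ≤ Fintype.card V := by
      have := Submodule.finrank_le ((LinearMap.range φ) ⊔ (LinearMap.ker L) :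
        Submodule ℝ (V → ℝ))
      simpa [Module.finrank_pi] using this
    have hpos' : 0 < Module.finrank ℝ ((LinearMap.range φ) ⊓ (LinearMap.ker L) :
        Submodule ℝ (V → ℝ)) := by omega
    have := Module.finrank_pos_iff.mp hpos'
    obtain ⟨⟨x, hx⟩, hx0⟩ :=
      exists_ne (0 : ((LinearMap.range φ) ⊓ (LinearMap.ker L) : Submodule ℝ (V → ℝ)))
    refine ⟨x, ?_, hx.1, hx.2⟩
    intro h; apply hx0; ext; simp [h]
  obtain ⟨x, hx0, ⟨c, rfl⟩, hker⟩ := hinter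
  have hc : c ≠ 0 := by rintro rfl; simp at hx0
  have hgt := hpos c hc
  have hle : φ c ⬝ᵥ (Γ.adjMatrix *ᵥ φ c) ≤ 0 := by
    rw [hq]
    apply Finset.sum_nonpos
    intro i _
    by_cases hi : i ∈ P
    · have : (star U *ᵥ φ c) i = 0 := by
        have := congr_fun (LinearMap.mem_ker.mp hker) ⟨i, hi⟩
        simpa [hL] using this
      simp [this]
    · have : lam i ≤ 0 := by
        by_contra h
        exact hi (by simp [hP, lt_of_not_ge h])
      exact mul_nonpos_of_nonpos_of_nonneg this (sq_nonneg _)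
  linarith

end Auxiliary

/-- for a connected signed graph of girth `g`, `i₊(Γ) ≥ ⌈g/2⌉ - 1`. -/
theorem posInertia_ge_of_girth {V : Type*} [Fintype V] [DecidableEq V] (Γ : SignedGraph V)
    (hconn : Γ.G.Connected) (g : ℕ) (hg : Γ.G.egirth = g) :
    (g + 1) / 2 - 1 ≤ Γ.posInertia := by
  classical
  have hg3 : 3 ≤ g := by
    have h3 := Γ.G.three_le_egirth
    rw [hg] at h3
    exact_mod_cast h3
  have hnotacyclic : ¬ Γ.G.IsAcyclic := by
    intro h
    rw [SimpleGraph.egirth_eq_top.mpr h] at hg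
    simp at hg
  obtain ⟨a, w, hcyc, hlen⟩ := SimpleGraph.exists_egirth_eq_length.mpr hnotacyclic
  have hlen' : w.length = g := by
    rw [hg] at hlen
    exact_mod_cast hlen.symm
  have hegl : Γ.G.egirth = (w.length : ℕ∞) := by rw [hg, hlen']
  set m := (g-1)/2 with hm
  suffices hmain : m ≤ Γ.posInertia by omega
  have hm1 : 1 ≤ m := by omega
  have h2m : 2*m ≤ g - 1 := by omega
  set f : ℕ → V := w.getVert with hf
  have finj : ∀ a b : ℕ, a < g → b < g → f a = f b → a = b := by
    intro a b ha hb hab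
    exact cycle_getVert_injOn hcyc (by omega) (by omega) hab
  have hadjk : ∀ k, k < g → Γ.G.Adj (f k) (f (k+1)) := fun k hk =>
    w.adj_getVert_succ (by omega)
  set s : ℕ → ℝ := fun k => Γ.sign (f k) (f (k+1)) with hs_def
  have hs : ∀ k, k < g → s k * s k = 1 := by
    intro k hk
    rcases Γ.sign_pm _ _ (hadjk k hk) with h | h <;>
      · rw [hs_def]
        simp only []
        rw [h]
        norm_num
  set eps : ℕ → ℝ := fun k => Nat.rec (motive := fun _ => ℝ) 1 (fun n acc => acc * s n) k
    with heps_def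
  have heps_succ : ∀ k, eps (k+1) = eps k * s k := fun k => rfl
  have heps0 : eps 0 = 1 := rfl
  have heps2 : ∀ k, k ≤ g - 1 → eps k * eps k = 1 := by
    intro k
    induction k with
    | zero => intro _; rw [heps0]; norm_num
    | succ n ih =>
      intro hn
      rw [heps_succ]
      have h1 := ih (by omega)
      have h2 := hs n (by omega)
      nlinarith
  have hkey : ∀ k, k < g - 1 → s k * (eps k * eps (k+1)) = 1 := by
    intro k hk
    rw [heps_succ]
    have h1 := heps2 k (by omega)
    have h2 := hs k (by omega)
    nlinarith
  set cc : (Fin m → ℝ) → ℕ → ℝ := fun c i => if h : i < m then c ⟨i, h⟩ else 0 with hcc_def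
  set uvec : Fin m → V → ℝ := fun i v =>
    (if v = f (2*(i:ℕ)) then eps (2*(i:ℕ)) else 0)
      + (if v = f (2*(i:ℕ)+1) then eps (2*(i:ℕ)+1) else 0) with huvec_def
  set φ : (Fin m → ℝ) →ₗ[ℝ] (V → ℝ) :=
    { toFun := fun c v => ∑ i : Fin m, c i * uvec i v
      map_add' := by intro c d; funext v; simp [add_mul, Finset.sum_add_distrib]
      map_smul' := by intro r c; funext v; simp [Finset.mul_sum, mul_assoc] } with hφ_def
  have hφapp : ∀ c v, φ c v = ∑ i : Fin m, c i * uvec i v := fun c v => rfl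
  set t : (Fin m → ℝ) → ℕ → ℝ := fun c k => eps k * cc c (k/2) with ht_def
  have huvec_val : ∀ (i : Fin m) (k : ℕ), k < g - 1 →
      uvec i (f k) = (if k = 2*(i:ℕ) then eps k else 0)
        + (if k = 2*(i:ℕ)+1 then eps k else 0) := by
    intro i k hkg
    have hi := i.2
    rw [huvec_def]
    simp only []
    congr 1
    · by_cases h : k = 2*(i:ℕ)
      · rw [if_pos (by rw [h]), if_pos h, h]
      · rw [if_neg, if_neg h]
        intro hc
        exact h (finj k (2*(i:ℕ)) (by omega) (by omega) hc)
    · by_cases h : k = 2*(i:ℕ)+1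
      · rw [if_pos (by rw [h]), if_pos h, h]
      · rw [if_neg, if_neg h]
        intro hc
        exact h (finj k (2*(i:ℕ)+1) (by omega) (by omega) hc)
  have hval : ∀ c (k : ℕ), k < 2*m → φ c (f k) = t c k := by
    intro c k hk
    rw [hφapp]
    have hsum : ∀ i : Fin m, c i * uvec i (f k)
        = c i * ((if k = 2*(i:ℕ) then eps k else 0) + (if k = 2*(i:ℕ)+1 then eps k else 0)) := by
      intro i
      rw [huvec_val i k (by omega)]
    rw [Finset.sum_congr rfl (fun i _ => hsum i)]
    have hk2 : k/2 < m := by omega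
    rw [Finset.sum_eq_single (⟨k/2, hk2⟩ : Fin m)]
    · have hpar : k = 2*(k/2) ∨ k = 2*(k/2)+1 := by omega
      have hcct : t c k = eps k * c ⟨k/2, hk2⟩ := by
        rw [ht_def]
        simp only []
        rw [hcc_def]
        simp only []
        rw [dif_pos hk2]
      rcases hpar with he | ho
      · rw [if_pos (by simpa using he), if_neg (by simp; omega), add_zero, hcct]
        ring
      · rw [if_neg (by simp; omega), if_pos (by simpa using ho), zero_add, hcct]
        ring
    · intro j _ hj
      have hjv : (j : ℕ) ≠ k/2 := fun hc => hj (Fin.ext hc)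
      rw [if_neg (by omega), if_neg (by omega)]
      ring
    · intro h
      exact absurd (Finset.mem_univ _) h
  have hval0 : ∀ c v, v ∉ (Finset.range (2*m)).image f → φ c v = 0 := by
    intro c v hv
    rw [hφapp]
    apply Finset.sum_eq_zero
    intro i _
    have hi := i.2
    have h1 : v ≠ f (2*(i:ℕ)) := by
      intro hc
      exact hv (Finset.mem_image.mpr ⟨2*(i:ℕ), Finset.mem_range.mpr (by omega), hc.symm⟩)
    have h2 : v ≠ f (2*(i:ℕ)+1) := by
      intro hc
      exact hv (Finset.mem_image.mpr ⟨2*(i:ℕ)+1, Finset.mem_range.mpr (by omega), hc.symm⟩)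
    rw [huvec_def]
    simp only []
    rw [if_neg h1, if_neg h2]
    ring
  have hepsne : ∀ k, k ≤ g - 1 → eps k ≠ 0 := by
    intro k hk h0
    have := heps2 k hk
    rw [h0] at this
    norm_num at this
  have hccv : ∀ (c : Fin m → ℝ) (i : Fin m), cc c (i : ℕ) = c i := by
    intro c i
    rw [hcc_def]
    simp only []
    rw [dif_pos i.2]
  have hinjφ : Function.Injective φ := by
    intro c1 c2 h12
    ext i
    have hi := i.2
    have hz : φ (c1 - c2) = 0 := by rw [map_sub, h12, sub_self]
    have hv := hval (c1 - c2) (2*(i:ℕ)) (by omega)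
    rw [hz] at hv
    have hdiv : (2*(i:ℕ))/2 = (i : ℕ) := by omega
    rw [ht_def] at hv
    simp only [] at hv
    rw [hdiv, hccv] at hv
    have := hepsne (2*(i:ℕ)) (by omega)
    have hsub : (c1 - c2) i = 0 := by
      rcases mul_eq_zero.mp hv.symm with h | h
      · exact absurd h this
      · exact h
    have : c1 i - c2 i = 0 := hsub
    linarith
  -- the adjacency matrix entries between cycle vertices
  have hA : ∀ k l : ℕ, k < 2*m → l < 2*m →
      Γ.adjMatrix (f k) (f l) = if l = k+1 then s k else if k = l+1 then s l else 0 := by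
    intro k l hk hl
    by_cases h1 : l = k+1
    · subst h1
      rw [if_pos rfl]
      show (if Γ.G.Adj (f k) (f (k+1)) then Γ.sign (f k) (f (k+1)) else 0) = s k
      rw [if_pos (hadjk k (by omega)), hs_def]
    · rw [if_neg h1]
      by_cases h2 : k = l+1
      · subst h2
        rw [if_pos rfl]
        show (if Γ.G.Adj (f (l+1)) (f l) then Γ.sign (f (l+1)) (f l) else 0) = s l
        rw [if_pos (hadjk l (by omega)).symm, Γ.sign_symm, hs_def]
      · rw [if_neg h2]
        show (if Γ.G.Adj (f k) (f l) then Γ.sign (f k) (f l) else 0) = 0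
        rw [if_neg]
        intro hadj
        rcases lt_trichotomy k l with h | h | h
        · have := cycle_no_chord hcyc hegl (i := k) (j := l) h (by omega) hadj
          omega
        · subst h
          exact Γ.G.loopless.irrefl _ hadj
        · have := cycle_no_chord hcyc hegl (i := l) (j := k) h (by omega) hadj.symm
          omega
  have ht2m : ∀ c, t c (2*m) = 0 := by
    intro c
    rw [ht_def]
    simp only []
    have hdiv : (2*m)/2 = m := by omega
    rw [hdiv, hcc_def]
    simp only []
    rw [dif_neg (lt_irrefl m)]
    ring
  set S : Finset V := (Finset.range (2*m)).image f with hS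
  have hSinj : ∀ x ∈ Finset.range (2*m), ∀ y ∈ Finset.range (2*m), f x = f y → x = y := by
    intro x hx y hy hxy
    exact finj x y (by have := Finset.mem_range.mp hx; omega)
      (by have := Finset.mem_range.mp hy; omega) hxy
  have hpos : ∀ c : Fin m → ℝ, c ≠ 0 → 0 < φ c ⬝ᵥ (Γ.adjMatrix *ᵥ φ c) := by
    intro c hc
    have hmv : ∀ u, (Γ.adjMatrix *ᵥ φ c) u
        = ∑ l ∈ Finset.range (2*m), Γ.adjMatrix u (f l) * t c l := by
      intro u
      show ∑ v, Γ.adjMatrix u v * φ c v = _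
      rw [← Finset.sum_subset (Finset.subset_univ S)
        (fun v _ hv => by rw [hval0 c v hv, mul_zero]), hS, Finset.sum_image hSinj]
      exact Finset.sum_congr rfl fun l hl => by rw [hval c l (Finset.mem_range.mp hl)]
    have hq1 : φ c ⬝ᵥ (Γ.adjMatrix *ᵥ φ c)
        = ∑ k ∈ Finset.range (2*m), ∑ l ∈ Finset.range (2*m),
            t c k * (Γ.adjMatrix (f k) (f l) * t c l) := by
      show ∑ u, φ c u * (Γ.adjMatrix *ᵥ φ c) u = _
      rw [← Finset.sum_subset (Finset.subset_univ S)
        (fun u _ hu => by rw [hval0 c u hu, zero_mul]), hS, Finset.sum_image hSinj]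
      refine Finset.sum_congr rfl fun k hk => ?_
      rw [hval c k (Finset.mem_range.mp hk), hmv, Finset.mul_sum]
    rw [hq1]
    -- evaluate the inner sums
    have hinner : ∀ k ∈ Finset.range (2*m),
        (∑ l ∈ Finset.range (2*m), t c k * (Γ.adjMatrix (f k) (f l) * t c l))
          = t c k * s k * t c (k+1)
            + (if k = 0 then 0 else t c k * s (k-1) * t c (k-1)) := by
      intro k hk
      have hkm := Finset.mem_range.mp hk
      have step1 : ∀ l ∈ Finset.range (2*m), t c k * (Γ.adjMatrix (f k) (f l) * t c l)
          = (if l = k+1 then t c k * s k * t c l else 0)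
            + (if l = k-1 ∧ k ≠ 0 then t c k * s l * t c l else 0) := by
        intro l hl
        have hlm := Finset.mem_range.mp hl
        rw [hA k l hkm hlm]
        by_cases ha : l = k+1
        · rw [if_pos ha, if_pos ha, if_neg (by omega)]
          ring
        · rw [if_neg ha]
          by_cases hb : k = l+1
          · rw [if_pos hb, if_neg ha, if_pos (by omega)]
            have : k - 1 = l := by omega
            ring
          · rw [if_neg hb, if_neg ha, if_neg (by omega)]
            ring
      rw [Finset.sum_congr rfl step1, Finset.sum_add_distrib]
      congr 1
      · rw [Finset.sum_ite_eq' (Finset.range (2*m)) (k+1) (fun l => t c k * s k * t c l)]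
        by_cases h : k+1 ∈ Finset.range (2*m)
        · rw [if_pos h]
        · rw [if_neg h]
          have hk1 : k + 1 = 2*m := by
            have := Finset.mem_range.not.mp h
            omega
          rw [hk1, ht2m]
          ring
      · by_cases hk0 : k = 0
        · rw [if_pos hk0]
          apply Finset.sum_eq_zero
          intro l _
          rw [if_neg (by simp [hk0])]
        · rw [if_neg hk0]
          have hsimp : ∀ l ∈ Finset.range (2*m),
              (if l = k-1 ∧ k ≠ 0 then t c k * s l * t c l else 0)
                = if l = k-1 then t c k * s (k-1) * t c (k-1) else 0 := by
            intro l _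
            by_cases h : l = k-1
            · rw [if_pos ⟨h, hk0⟩, if_pos h, h]
            · rw [if_neg (by tauto), if_neg h]
          rw [Finset.sum_congr rfl hsimp,
            Finset.sum_ite_eq' (Finset.range (2*m)) (k-1)
              (fun _ => t c k * s (k-1) * t c (k-1)),
            if_pos (Finset.mem_range.mpr (by omega))]
    rw [Finset.sum_congr rfl hinner, Finset.sum_add_distrib]
    obtain ⟨m', hm'⟩ : ∃ m', 2*m = m'+1 := ⟨2*m - 1, by omega⟩
    have hlast : t c (m'+1) = 0 := by rw [← hm']; exact ht2m c
    have e1 : ∑ k ∈ Finset.range (2*m), t c k * s k * t c (k+1)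
        = ∑ k ∈ Finset.range m', t c k * s k * t c (k+1) := by
      rw [hm', Finset.sum_range_succ, hlast, mul_zero, add_zero]
    have e2 : (∑ k ∈ Finset.range (2*m),
          (if k = 0 then (0:ℝ) else t c k * s (k-1) * t c (k-1)))
        = ∑ k ∈ Finset.range m', t c k * s k * t c (k+1) := by
      rw [hm', Finset.sum_range_succ'
        (fun k => if k = 0 then (0:ℝ) else t c k * s (k-1) * t c (k-1))]
      have hstep : ∀ i ∈ Finset.range m',
          (if i+1 = 0 then (0:ℝ) else t c (i+1) * s (i+1-1) * t c (i+1-1))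
            = t c i * s i * t c (i+1) := by
        intro i _
        rw [if_neg (by omega)]
        simp only [Nat.add_sub_cancel]
        ring
      rw [Finset.sum_congr rfl hstep, if_pos rfl, add_zero]
    rw [e1, e2]
    have hcollect : (∑ k ∈ Finset.range m', t c k * s k * t c (k+1))
        + (∑ k ∈ Finset.range m', t c k * s k * t c (k+1))
        = 2 * ∑ k ∈ Finset.range m', t c k * s k * t c (k+1) := by ring
    rw [hcollect]
    -- now convert each term to cc products
    have hterm : ∀ k ∈ Finset.range m', t c k * s k * t c (k+1)
        = cc c (k/2) * cc c ((k+1)/2) := by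
      intro k hk
      have hkm := Finset.mem_range.mp hk
      have hk1 := hkey k (by omega)
      rw [ht_def]
      simp only []
      have : eps k * cc c (k/2) * s k * (eps (k+1) * cc c ((k+1)/2))
          = (s k * (eps k * eps (k+1))) * (cc c (k/2) * cc c ((k+1)/2)) := by ring
      rw [this, hk1, one_mul]
    rw [Finset.sum_congr rfl hterm]
    -- add the vanishing last term to make it a sum over range (2*m)
    have hfull : ∑ k ∈ Finset.range (2*m), cc c (k/2) * cc c ((k+1)/2)
        = ∑ k ∈ Finset.range m', cc c (k/2) * cc c ((k+1)/2) := by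
      rw [hm', Finset.sum_range_succ]
      have h1 : (m'+1)/2 = m := by omega
      have h2 : cc c m = 0 := by
        rw [hcc_def]
        simp only []
        rw [dif_neg (lt_irrefl m)]
      rw [h1, h2, mul_zero, add_zero]
    rw [← hfull, sum_halves_aux]
    have hpos' : 0 < ∑ i ∈ Finset.range m, ((cc c) i^2 + (cc c) i * (cc c) (i+1)) := by
      apply pos_sum_aux
      · rw [hcc_def]
        simp only []
        rw [dif_neg (lt_irrefl m)]
      · obtain ⟨i, hi⟩ := Function.ne_iff.mp hc
        refine ⟨(i : ℕ), i.2, ?_⟩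
        rw [hccv]
        simpa using hi
    linarith
  exact posInertia_aux Γ φ hinjφ hpos
end

section
/- Let Γ be a connected signed graph with girth g whose negative inertia index satisfies i₋(Γ) = ⌈g/2⌉ − 1, and suppose Γ is not a cycle. Then g ∈ {3, 4} and i₋(Γ) = 1. -/
open Matrix

open Fin.NatCast Fin.CommRing

section GirthAux

set_option linter.unusedSectionVars false

open Matrix SimpleGraph

variable {V : Type*} [Fintype V] [DecidableEq V]


open Matrix

variable {V : Type*} [Fintype V] [DecidableEq V]

lemma quadform_eigen_expand (A : Matrix V V ℝ) (hA : A.IsHermitian) (y : V → ℝ) :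
    y ⬝ᵥ A *ᵥ y = ∑ j, hA.eigenvalues j * ((hA.eigenvectorBasis j : V → ℝ) ⬝ᵥ y)^2 := by
  classical
  have hsum := (hA.eigenvectorBasis).sum_inner_mul_inner
    (x := (WithLp.toLp 2 y : EuclideanSpace ℝ V)) (y := (WithLp.toLp 2 (A *ᵥ y) : EuclideanSpace ℝ V))
  have hinner : ∀ (u v : EuclideanSpace ℝ V), (inner ℝ u v : ℝ) = (u : V → ℝ) ⬝ᵥ (v : V → ℝ) := by
    intro u v
    simp [PiLp.inner_apply, dotProduct, mul_comm]
  rw [hinner] at hsum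
  rw [← hsum]
  apply Finset.sum_congr rfl
  intro j _
  have h1 : ((hA.eigenvectorBasis j : V → ℝ)) ⬝ᵥ (A *ᵥ y) = hA.eigenvalues j * ((hA.eigenvectorBasis j : V → ℝ) ⬝ᵥ y) := by
    rw [dotProduct_mulVec, ← mulVec_transpose]
    have hsymm : Aᵀ = A := by
      have := hA; rwa [Matrix.IsHermitian, conjTranspose_eq_transpose_of_trivial] at this
    rw [hsymm]
    have h2 : A *ᵥ ((hA.eigenvectorBasis j : V → ℝ)) = hA.eigenvalues j • ((hA.eigenvectorBasis j : V → ℝ)) :=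
      hA.mulVec_eigenvectorBasis j
    rw [h2, smul_dotProduct]
    rfl
  rw [hinner, hinner, h1]
  rw [dotProduct_comm]
  ring


lemma card_neg_eigen_ge (A : Matrix V V ℝ) (hA : A.IsHermitian) (k : ℕ)
    (w : Fin k → (V → ℝ))
    (hw : ∀ c : Fin k → ℝ, c ≠ 0 →
      (∑ i, c i • w i) ⬝ᵥ A *ᵥ (∑ i, c i • w i) < 0) :
    k ≤ (Finset.univ.filter fun i => hA.eigenvalues i < 0).card := by
  classical
  by_contra hlt
  push_neg at hlt
  set Neg := {j : V // hA.eigenvalues j < 0} with hNeg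
  have hcard : Fintype.card Neg = (Finset.univ.filter fun i => hA.eigenvalues i < 0).card := by
    simp [hNeg, Fintype.card_subtype]
  -- the linear map
  let Φ : (Fin k → ℝ) →ₗ[ℝ] (Neg → ℝ) :=
    { toFun := fun c j => ∑ i, c i * ((hA.eigenvectorBasis j.1 : V → ℝ) ⬝ᵥ w i)
      map_add' := by
        intro a b; funext j; simp [add_mul, Finset.sum_add_distrib]
      map_smul' := by
        intro m a; funext j; simp [Finset.mul_sum, mul_assoc] }
  have hnotinj : ¬ Function.Injective Φ := by
    intro hinj
    have h1 := LinearMap.finrank_le_finrank_of_injective hinj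
    simp only [Module.finrank_pi] at h1
    rw [Fintype.card_fin] at h1
    omega
  rw [Function.not_injective_iff] at hnotinj
  obtain ⟨a, b, hab, hne⟩ := hnotinj
  set c := a - b with hc
  have hc0 : c ≠ 0 := sub_ne_zero.mpr hne
  have hΦc : Φ c = 0 := by rw [hc, map_sub, hab, sub_self]
  set x := ∑ i, c i • w i with hx
  have hxq := hw c hc0
  have hexp := quadform_eigen_expand A hA x
  have hdot : ∀ j : V, (hA.eigenvectorBasis j : V → ℝ) ⬝ᵥ x = ∑ i, c i * ((hA.eigenvectorBasis j : V → ℝ) ⬝ᵥ w i) := by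
    intro j
    rw [hx]
    simp only [dotProduct, Finset.sum_apply, Pi.smul_apply, smul_eq_mul, Finset.mul_sum]
    rw [Finset.sum_comm]
    apply Finset.sum_congr rfl
    intro i _
    apply Finset.sum_congr rfl
    intro v _
    ring
  have hnonneg : 0 ≤ x ⬝ᵥ A *ᵥ x := by
    rw [hexp]
    apply Finset.sum_nonneg
    intro j _
    by_cases hj : hA.eigenvalues j < 0
    · have : (hA.eigenvectorBasis j : V → ℝ) ⬝ᵥ x = 0 := by
        rw [hdot j]
        have := congrFun hΦc ⟨j, hj⟩
        simpa [Φ] using this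
      rw [this]
      simp
    · push_neg at hj
      positivity
  linarith



lemma negdef_of_dom (k : ℕ) (G B : Fin k → Fin k → ℝ)
    (hGB : ∀ i j, i ≠ j → |G i j| ≤ B i j)
    (hBs : ∀ i j, B i j = B j i)
    (hdom : ∀ i, (∑ j ∈ Finset.univ.erase i, B i j) < - G i i) :
    ∀ c : Fin k → ℝ, c ≠ 0 → ∑ i, ∑ j, c i * c j * G i j < 0 := by
  classical
  intro c hc
  have hsplit : ∑ i, ∑ j, c i * c j * G i j
      = ∑ i, (c i ^ 2 * G i i + ∑ j ∈ Finset.univ.erase i, c i * c j * G i j) := by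
    apply Finset.sum_congr rfl
    intro i _
    rw [← Finset.sum_erase_add _ _ (Finset.mem_univ i), add_comm]
    congr 1
    ring
  have hBnn : ∀ i j, i ≠ j → 0 ≤ B i j := fun i j h => le_trans (abs_nonneg _) (hGB i j h)
  have hbound : ∀ i, ∑ j ∈ Finset.univ.erase i, c i * c j * G i j
      ≤ ∑ j ∈ Finset.univ.erase i, B i j * (c i ^ 2 + c j ^ 2) / 2 := by
    intro i
    apply Finset.sum_le_sum
    intro j hj
    have hij : i ≠ j := fun h => (Finset.mem_erase.mp hj).1 h.symm
    have h1 : c i * c j * G i j ≤ |c i| * |c j| * |G i j| := by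
      calc c i * c j * G i j ≤ |c i * c j * G i j| := le_abs_self _
        _ = |c i| * |c j| * |G i j| := by rw [abs_mul, abs_mul]
    have h2 : |c i| * |c j| * |G i j| ≤ |c i| * |c j| * B i j := by
      apply mul_le_mul_of_nonneg_left (hGB i j hij) (by positivity)
    have h3 : |c i| * |c j| * B i j ≤ (c i ^ 2 + c j ^ 2) / 2 * B i j := by
      apply mul_le_mul_of_nonneg_right _ (hBnn i j hij)
      nlinarith [sq_nonneg (|c i| - |c j|), sq_abs (c i), sq_abs (c j)]
    linarith [h1, h2, h3]
  have hswap : ∑ i, ∑ j ∈ Finset.univ.erase i, B i j * c j ^ 2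
      = ∑ i, ∑ j ∈ Finset.univ.erase i, B i j * c i ^ 2 := by
    rw [Finset.sum_comm' (s' := fun j => Finset.univ.erase j) (t' := Finset.univ)
      (fun x y => by
        simp only [Finset.mem_univ, Finset.mem_erase, true_and, and_true]
        exact ne_comm)]
    apply Finset.sum_congr rfl
    intro j _
    apply Finset.sum_congr rfl
    intro i _
    rw [hBs]
  have e1 : ∀ i : Fin k, ∑ j ∈ Finset.univ.erase i, B i j * (c i ^ 2 + c j ^ 2) / 2
      = (∑ j ∈ Finset.univ.erase i, B i j * c i ^ 2) / 2
        + (∑ j ∈ Finset.univ.erase i, B i j * c j ^ 2) / 2 := by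
    intro i
    rw [Finset.sum_div, Finset.sum_div, ← Finset.sum_add_distrib]
    apply Finset.sum_congr rfl
    intro j _
    ring
  have hmain : ∑ i, ∑ j, c i * c j * G i j
      ≤ ∑ i, c i ^ 2 * (G i i + ∑ j ∈ Finset.univ.erase i, B i j) := by
    rw [hsplit]
    calc ∑ i, (c i ^ 2 * G i i + ∑ j ∈ Finset.univ.erase i, c i * c j * G i j)
        ≤ ∑ i, (c i ^ 2 * G i i + ∑ j ∈ Finset.univ.erase i, B i j * (c i ^ 2 + c j ^ 2) / 2) :=
          Finset.sum_le_sum (fun i _ => by linarith [hbound i])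
      _ = ∑ i, (c i ^ 2 * G i i + (∑ j ∈ Finset.univ.erase i, B i j * c i ^ 2) / 2)
            + ∑ i, (∑ j ∈ Finset.univ.erase i, B i j * c j ^ 2) / 2 := by
          rw [← Finset.sum_add_distrib]
          apply Finset.sum_congr rfl
          intro i _
          rw [e1 i]
          ring
      _ = ∑ i, (c i ^ 2 * G i i + (∑ j ∈ Finset.univ.erase i, B i j * c i ^ 2) / 2)
            + ∑ i, (∑ j ∈ Finset.univ.erase i, B i j * c i ^ 2) / 2 := by
          congr 1
          rw [← Finset.sum_div, ← Finset.sum_div, hswap]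
      _ = ∑ i, c i ^ 2 * (G i i + ∑ j ∈ Finset.univ.erase i, B i j) := by
          rw [← Finset.sum_add_distrib]
          apply Finset.sum_congr rfl
          intro i _
          have : ∑ j ∈ Finset.univ.erase i, B i j * c i ^ 2
              = (∑ j ∈ Finset.univ.erase i, B i j) * c i ^ 2 := by
            rw [Finset.sum_mul]
          rw [this]
          ring
  -- now strict negativity
  obtain ⟨i0, hi0⟩ : ∃ i0, c i0 ≠ 0 := by
    by_contra hall
    push_neg at hall
    exact hc (funext hall)
  have hterm : ∀ i, c i ^ 2 * (G i i + ∑ j ∈ Finset.univ.erase i, B i j) ≤ 0 := by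
    intro i
    apply mul_nonpos_of_nonneg_of_nonpos (sq_nonneg _)
    linarith [hdom i]
  have hi0term : c i0 ^ 2 * (G i0 i0 + ∑ j ∈ Finset.univ.erase i0, B i0 j) < 0 := by
    apply mul_neg_of_pos_of_neg
    · positivity
    · linarith [hdom i0]
  have : ∑ i, c i ^ 2 * (G i i + ∑ j ∈ Finset.univ.erase i, B i j) < 0 := by
    rw [← Finset.sum_erase_add _ _ (Finset.mem_univ i0)]
    have h2 : ∑ i ∈ Finset.univ.erase i0, c i ^ 2 * (G i i + ∑ j ∈ Finset.univ.erase i, B i j) ≤ 0 :=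
      Finset.sum_nonpos (fun i _ => hterm i)
    linarith
  linarith


lemma quad_sum (A : Matrix V V ℝ) {k : ℕ} (w : Fin k → V → ℝ) (c : Fin k → ℝ) :
    (∑ i, c i • w i) ⬝ᵥ A *ᵥ (∑ i, c i • w i)
      = ∑ i, ∑ j, c i * c j * (w i ⬝ᵥ A *ᵥ w j) := by
  have h1 : A *ᵥ (∑ j, c j • w j) = ∑ j, c j • (A *ᵥ w j) := by
    rw [← A.mulVecLin_apply, map_sum]
    simp [Matrix.mulVecLin_apply]
  rw [h1]
  conv_rhs => rw [Finset.sum_comm]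
  simp only [dotProduct, Finset.sum_apply, Pi.smul_apply, smul_eq_mul, Finset.sum_mul,
    Finset.mul_sum]
  rw [Finset.sum_comm]
  apply Finset.sum_congr rfl
  intro i _
  rw [Finset.sum_comm]
  apply Finset.sum_congr rfl
  intro j _
  apply Finset.sum_congr rfl
  intro u _
  ring

lemma pair_quad (A : Matrix V V ℝ) (N N' : ℝ) (p q r s : V) :
    (fun v => N * (if v = p then (1:ℝ) else 0) + (if v = q then 1 else 0)) ⬝ᵥ A *ᵥ
      (fun v => N' * (if v = r then (1:ℝ) else 0) + (if v = s then 1 else 0))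
    = N * N' * A p r + N * A p s + N' * A q r + A q s := by
  have hcol : ∀ u : V, (A *ᵥ (fun v => N' * (if v = r then (1:ℝ) else 0) + (if v = s then 1 else 0))) u
      = N' * A u r + A u s := by
    intro u
    simp only [mulVec, dotProduct, mul_add, Finset.sum_add_distrib, mul_ite, mul_one, mul_zero]
    rw [Finset.sum_ite_eq' Finset.univ r (fun v => A u v * N'),
      Finset.sum_ite_eq' Finset.univ s (fun v => A u v)]
    simp [mul_comm]
  simp only [dotProduct]
  simp only [hcol]
  simp only [add_mul, mul_ite, ite_mul, one_mul, zero_mul, mul_one, mul_zero, zero_add, add_zero,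
    Finset.sum_add_distrib]
  rw [Finset.sum_ite_eq' Finset.univ p (fun u => N * (N' * A u r + A u s)),
    Finset.sum_ite_eq' Finset.univ q (fun u => N' * A u r + A u s)]
  simp
  ring


section WalkFSec
variable {G : SimpleGraph V}

lemma walk_support_eq_map_getVert {u v : V} (p : G.Walk u v) :
    p.support = (List.range (p.length + 1)).map p.getVert := by
  induction p with
  | nil => simp [List.range_succ]
  | @cons u' v' w' h q ih =>
    have hr : List.range (q.length + 1 + 1) = 0 :: (List.range (q.length + 1)).map Nat.succ :=
      List.range_succ_eq_map
    rw [Walk.support_cons, Walk.length_cons, hr, List.map_cons, List.map_map]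
    have h0 : (Walk.cons h q).getVert 0 = u' := Walk.getVert_zero _
    rw [h0, ih]
    congr 1

lemma cycle_fn {a : V} (w : G.Walk a a) (hw : w.IsCycle) {g : ℕ} [NeZero g] (hg : 3 ≤ g)
    (hlen : w.length = g) :
    ∃ f : Fin g → V, Function.Injective f ∧ ∀ i : Fin g, G.Adj (f i) (f (i + 1)) := by
  classical
  have hone : (1 : Fin g).val = 1 := by
    rw [Fin.val_one']
    exact Nat.mod_eq_of_lt (by omega)
  refine ⟨fun i => w.getVert (i.val + 1), ?_, ?_⟩
  · have htail : w.support.tail = (List.range g).map (fun t => w.getVert (t + 1)) := by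
      rw [walk_support_eq_map_getVert, hlen, List.range_succ_eq_map, List.map_cons,
        List.tail_cons, List.map_map]
      rfl
    have hnd : w.support.tail.Nodup := hw.support_nodup
    rw [htail] at hnd
    have hinj := (List.nodup_map_iff_inj_on List.nodup_range).mp hnd
    intro i j hij
    have := hinj i.val (List.mem_range.mpr i.isLt) j.val (List.mem_range.mpr j.isLt) hij
    exact Fin.ext this
  · intro i
    show G.Adj (w.getVert (i.val + 1)) (w.getVert ((i + 1).val + 1))
    have hadd : (i + 1).val = (i.val + 1) % g := by
      rw [Fin.add_def, hone]
    by_cases hi : i.val + 1 < g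
    · have h1 : (i + 1).val = i.val + 1 := by rw [hadd]; exact Nat.mod_eq_of_lt hi
      rw [h1]
      exact w.adj_getVert_succ (by rw [hlen]; omega)
    · have h1 : (i + 1).val = 0 := by
        rw [hadd]
        have h2 : i.val + 1 = g := by have := i.isLt; omega
        rw [h2, Nat.mod_self]
      rw [h1]
      have h2 : i.val + 1 = g := by have := i.isLt; omega
      rw [h2]
      have h3 : w.getVert g = a := by rw [← hlen]; exact w.getVert_length
      rw [h3]
      have h4 := w.adj_getVert_succ (i := 0) (by rw [hlen]; omega)
      rw [w.getVert_zero] at h4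
      simpa using h4



variable {g : ℕ} [NeZero g]

/-- walk along the cyclic function f, starting at f i, of length t -/
def walkF (f : Fin g → V) (hadj : ∀ i : Fin g, G.Adj (f i) (f (i + 1))) :
    (t : ℕ) → (i : Fin g) → G.Walk (f i) (f (i + (t : Fin g)))
  | 0, i => Walk.nil.copy rfl (by simp)
  | (t+1), i => (Walk.cons (hadj i) (walkF f hadj t (i+1))).copy rfl
      (by push_cast; ring_nf)

lemma walkF_length (f : Fin g → V) (hadj : ∀ i : Fin g, G.Adj (f i) (f (i + 1)))
    (t : ℕ) (i : Fin g) : (walkF f hadj t i).length = t := by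
  induction t generalizing i with
  | zero => simp [walkF]
  | succ t ih => simp [walkF, ih]

lemma walkF_support (f : Fin g → V) (hadj : ∀ i : Fin g, G.Adj (f i) (f (i + 1)))
    (t : ℕ) (i : Fin g) :
    (walkF f hadj t i).support = (List.range (t + 1)).map (fun s : ℕ => f (i + (s : Fin g))) := by
  induction t generalizing i with
  | zero => simp [walkF, List.range_succ]
  | succ t ih =>
    rw [List.range_succ_eq_map]
    simp only [walkF, Walk.support_copy, Walk.support_cons, ih, List.map_cons, List.map_map]
    congr 1
    · simp
    · apply List.map_congr_left
      intro s _
      simp only [Function.comp]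
      congr 1
      push_cast
      ring

lemma natCast_fin_inj {s t : ℕ} (hs : s < g) (ht : t < g) (h : (s : Fin g) = (t : Fin g)) :
    s = t := by
  have := congrArg Fin.val h
  rwa [Fin.val_natCast, Fin.val_natCast, Nat.mod_eq_of_lt hs, Nat.mod_eq_of_lt ht] at this

lemma walkF_isPath (f : Fin g → V) (hadj : ∀ i : Fin g, G.Adj (f i) (f (i + 1)))
    (hf : Function.Injective f) {t : ℕ} (ht : t < g) (i : Fin g) :
    (walkF f hadj t i).IsPath := by
  apply Walk.IsPath.mk'
  rw [walkF_support]
  apply List.Nodup.map_on _ List.nodup_range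
  intro s1 h1 s2 h2 heq
  rw [List.mem_range] at h1 h2
  have := hf heq
  have h3 : (s1 : Fin g) = (s2 : Fin g) := by
    have := congrArg (fun z => z - i) (by rw [add_comm i, add_comm i] at this; exact this :
      (s1 : Fin g) + i = (s2 : Fin g) + i)
    simpa using this
  exact natCast_fin_inj (by omega) (by omega) h3

lemma mem_walkF_support (f : Fin g → V) (hadj : ∀ i : Fin g, G.Adj (f i) (f (i + 1)))
    {t : ℕ} {i : Fin g} {v : V} (hv : v ∈ (walkF f hadj t i).support) :
    v ∈ Set.range f := by
  rw [walkF_support] at hv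
  obtain ⟨s, _, rfl⟩ := List.mem_map.mp hv
  exact ⟨_, rfl⟩

lemma girth_le_of_cycle {g' : ℕ} (hg : G.egirth = g') {a : V} (w : G.Walk a a)
    (hw : w.IsCycle) : g' ≤ w.length := by
  have h1 : (g' : ℕ∞) ≤ G.egirth := le_of_eq hg.symm
  have := SimpleGraph.le_egirth.mp h1 a w hw
  exact_mod_cast this

lemma isPath_edge_length_one {u v : V} {p : G.Walk v u} (hp : p.IsPath)
    (he : s(u, v) ∈ p.edges) : p.length = 1 := by
  cases p with
  | nil => simp at he
  | @cons _ w _ h q =>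
    rw [Walk.edges_cons, List.mem_cons] at he
    rcases he with he | he
    · rw [Sym2.eq_iff] at he
      rcases he with ⟨h1, h2⟩ | ⟨h1, h2⟩
      · subst h2
        exact (G.irrefl h).elim
      · subst h1
        cases q with
        | nil => rfl
        | @cons _ y _ h' r =>
          rw [Walk.cons_isPath_iff, Walk.cons_isPath_iff] at hp
          exact absurd (Walk.end_mem_support r) (fun hmem => hp.1.2 hmem)
    · have hv : v ∈ q.support := Walk.snd_mem_support_of_mem_edges q he
      rw [Walk.cons_isPath_iff] at hp
      exact absurd hv hp.2

lemma fin_sub_val_add {i j : Fin g} (hne : i ≠ j) :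
    (j - i).val + (i - j).val = g := by
  have h1 : (j - i) + (i - j) = 0 := by ring
  have h2 : ((j - i) + (i - j)).val = ((j - i).val + (i - j).val) % g := by
    rw [Fin.add_def]
  rw [h1] at h2
  have h3 : (0 : Fin g).val = 0 := rfl
  have h4 : (j - i).val ≠ 0 := by
    intro h
    exact hne (by
      have : j - i = 0 := Fin.ext (by simp [h])
      have := sub_eq_zero.mp this
      exact this.symm)
  have h5 : (i - j).val ≠ 0 := by
    intro h
    exact hne (by
      have : i - j = 0 := Fin.ext (by simp [h])
      exact sub_eq_zero.mp this)
  have l1 := (j - i).isLt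
  have l2 := (i - j).isLt
  rw [h3] at h2
  -- (a + b) % g = 0, 0 < a,b < g  ⇒ a + b = g
  rcases Nat.lt_or_ge ((j - i).val + (i - j).val) g with hlt | hge
  · rw [Nat.mod_eq_of_lt hlt] at h2; omega
  · have hlt2 : (j - i).val + (i - j).val - g < g := by omega
    rw [Nat.mod_eq_sub_mod hge, Nat.mod_eq_of_lt hlt2] at h2
    omega

/-- key construction: cycle through x and an arc of the cycle -/
lemma girth_le_arc {g' : ℕ} (hg : G.egirth = g') (hgg : g = g')
    (f : Fin g → V) (hf : Function.Injective f)
    (hadj : ∀ i : Fin g, G.Adj (f i) (f (i + 1)))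
    {x : V} (hx : x ∉ Set.range f) {j₀ j₁ : Fin g} (hne : j₀ ≠ j₁)
    (h0 : G.Adj x (f j₀)) (h1 : G.Adj x (f j₁)) :
    g ≤ (j₁ - j₀).val + 2 := by
  classical
  set d := (j₁ - j₀).val with hd
  have hd1 : 1 ≤ d := by
    rcases Nat.eq_zero_or_pos d with h | h
    · exact absurd (by
        have : j₁ - j₀ = 0 := Fin.ext (by simp [← hd, h])
        exact (sub_eq_zero.mp this).symm) hne
    · exact h
  have hdlt : d < g := (j₁ - j₀).isLt
  have hend : j₀ + (d : Fin g) = j₁ := by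
    rw [hd, Fin.cast_val_eq_self]
    ring
  set arc : G.Walk (f j₀) (f j₁) := (walkF f hadj d j₀).copy rfl (congrArg f hend) with harc
  have harcpath : arc.IsPath := by
    rw [harc, Walk.isPath_copy]
    exact walkF_isPath f hadj hf hdlt j₀
  have hxarc : x ∉ arc.support := by
    intro hmem
    rw [harc, Walk.support_copy] at hmem
    exact hx (mem_walkF_support f hadj hmem)
  set q : G.Walk (f j₀) x := arc.concat h1.symm with hq
  have hqpath : q.IsPath := by
    rw [Walk.isPath_def, hq, Walk.support_concat, List.nodup_append]
    refine ⟨harcpath.support_nodup, List.nodup_singleton x, ?_⟩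
    intro a ha b hb
    rw [List.mem_singleton] at hb
    subst hb
    exact fun hab => hxarc (hab ▸ ha)
  have hcyc : (Walk.cons h0 q).IsCycle := by
    rw [Walk.cons_isCycle_iff]
    refine ⟨hqpath, ?_⟩
    rw [hq, Walk.edges_concat, List.concat_eq_append, List.mem_append, List.mem_singleton]
    rintro (hmem | hmem)
    · exact hxarc (Walk.fst_mem_support_of_mem_edges arc hmem)
    · rw [Sym2.eq_iff] at hmem
      rcases hmem with ⟨ha, hb⟩ | ⟨ha, hb⟩
      · exact hx ⟨j₁, ha.symm⟩
      · exact hne (hf hb)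
  have hlen : (Walk.cons h0 q).length = d + 2 := by
    rw [Walk.length_cons, hq, Walk.length_concat, harc, Walk.length_copy, walkF_length]
  have := girth_le_of_cycle hg _ hcyc
  rw [hlen, ← hgg] at this
  exact this

lemma four_ge_of_two_nbrs {g' : ℕ} (hg : G.egirth = g') (hgg : g = g')
    (f : Fin g → V) (hf : Function.Injective f)
    (hadj : ∀ i : Fin g, G.Adj (f i) (f (i + 1)))
    {x : V} (hx : x ∉ Set.range f) {j₀ j₁ : Fin g} (hne : j₀ ≠ j₁)
    (h0 : G.Adj x (f j₀)) (h1 : G.Adj x (f j₁)) :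
    g ≤ 4 := by
  have b1 := girth_le_arc hg hgg f hf hadj hx hne h0 h1
  have b2 := girth_le_arc hg hgg f hf hadj hx (Ne.symm hne) h1 h0
  have b3 := fin_sub_val_add hne
  omega

lemma no_chord {g' : ℕ} (hg : G.egirth = g') (hgg : g = g') (hg3 : 3 ≤ g)
    (f : Fin g → V) (hf : Function.Injective f)
    (hadj : ∀ i : Fin g, G.Adj (f i) (f (i + 1)))
    {i j : Fin g} (hij : G.Adj (f i) (f j)) :
    j = i + 1 ∨ i = j + 1 := by
  classical
  by_contra hcon
  push_neg at hcon
  obtain ⟨hc1, hc2⟩ := hcon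
  have hne : i ≠ j := fun h => hij.ne (congrArg f h)
  set d := (j - i).val with hd
  have hd1 : 1 ≤ d := by
    rcases Nat.eq_zero_or_pos d with h | h
    · exact absurd (by
        have : j - i = 0 := Fin.ext (by simp [← hd, h])
        exact (sub_eq_zero.mp this).symm) hne
    · exact h
  have hdlt : d < g := (j - i).isLt
  have hone : (1 : Fin g).val = 1 := by
    rw [Fin.val_one']
    exact Nat.mod_eq_of_lt (by omega)
  have hd2 : 2 ≤ d := by
    rcases Nat.lt_or_ge d 2 with h | h
    · exfalso
      have hda : d = 1 := by omega
      apply hc1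
      have hsub : j - i = 1 := by
        apply Fin.ext
        rw [hone, ← hd, hda]
      have := congrArg (fun z => z + i) hsub
      simpa [sub_add_cancel, add_comm] using this
    · exact h
  -- similarly d ≤ g - 2
  have hsum := fin_sub_val_add hne
  have hd3 : d ≤ g - 2 := by
    rcases Nat.lt_or_ge (g - 2) d with h | h
    · exfalso
      have hval : (i - j).val = 1 := by omega
      apply hc2
      have h5 : i - j = 1 := by
        apply Fin.ext
        rw [hone, hval]
      have := congrArg (fun z => z + j) h5
      simpa [sub_add_cancel, add_comm] using this
    · exact h
  have hend : i + (d : Fin g) = j := by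
    rw [hd, Fin.cast_val_eq_self]
    ring
  set arc : G.Walk (f i) (f j) := (walkF f hadj d i).copy rfl (congrArg f hend) with harc
  have harcpath : arc.IsPath := by
    rw [harc, Walk.isPath_copy]
    exact walkF_isPath f hadj hf hdlt i
  have hcyc : (Walk.cons hij.symm arc).IsCycle := by
    rw [Walk.cons_isCycle_iff]
    refine ⟨harcpath, fun hmem => ?_⟩
    have := isPath_edge_length_one harcpath hmem
    rw [harc, Walk.length_copy, walkF_length] at this
    omega
  have := girth_le_of_cycle hg _ hcyc
  rw [← hgg] at this
  have hlen : (Walk.cons hij.symm arc).length = d + 1 := by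
    rw [Walk.length_cons, harc, Walk.length_copy, walkF_length]
  rw [hlen] at this
  omega

end WalkFSec

end GirthAux

namespace SignedGraph
variable {V : Type*} [Fintype V] [DecidableEq V]

lemma adjMatrix_apply_of_not_adj (Γ : SignedGraph V) {u v : V} (h : ¬ Γ.G.Adj u v) :
    Γ.adjMatrix u v = 0 := by simp [SignedGraph.adjMatrix, h]

lemma adjMatrix_pm (Γ : SignedGraph V) {u v : V} (h : Γ.G.Adj u v) :
    Γ.adjMatrix u v = 1 ∨ Γ.adjMatrix u v = -1 := by
  simp only [SignedGraph.adjMatrix, if_pos h]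
  exact Γ.sign_pm u v h

lemma adjMatrix_symm (Γ : SignedGraph V) (u v : V) :
    Γ.adjMatrix u v = Γ.adjMatrix v u := by
  have := congrFun (congrFun Γ.isHermitian u) v
  simpa [Matrix.conjTranspose_apply] using this.symm

lemma adjMatrix_diag (Γ : SignedGraph V) (u : V) : Γ.adjMatrix u u = 0 :=
  Γ.adjMatrix_apply_of_not_adj Γ.G.irrefl

lemma adjMatrix_abs_le_one (Γ : SignedGraph V) (u v : V) : |Γ.adjMatrix u v| ≤ 1 := by
  by_cases h : Γ.G.Adj u v
  · rcases Γ.adjMatrix_pm h with h' | h' <;> rw [h'] <;> norm_num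
  · rw [Γ.adjMatrix_apply_of_not_adj h]; norm_num

lemma unique_nbr_negInertia (Γ : SignedGraph V) {g : ℕ} [NeZero g] (hg3 : 3 ≤ g)
    (f : Fin g → V) (hf : Function.Injective f)
    (hadj : ∀ i : Fin g, Γ.G.Adj (f i) (f (i + 1)))
    (hchord : ∀ i j : Fin g, Γ.G.Adj (f i) (f j) → j = i + 1 ∨ i = j + 1)
    (x : V) (hx : x ∉ Set.range f)
    (hxadj : Γ.G.Adj x (f 0))
    (huniq : ∀ p : Fin g, Γ.G.Adj x (f p) → p = 0) :
    (g + 1) / 2 ≤ Γ.negInertia := by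
  classical
  set k := (g + 1) / 2 with hk
  have hk1 : 1 ≤ k := by omega
  have hk2 : 2 * k ≤ g + 1 := by omega
  have hk3 : g ≤ 2 * k := by omega
  set A := Γ.adjMatrix with hA
  have hone : (1 : Fin g).val = 1 := by
    rw [Fin.val_one']; exact Nat.mod_eq_of_lt (by omega)
  have hzerov : ((0 : Fin g)).val = 0 := rfl
  have vcast : ∀ m : ℕ, m < g → ((m : Fin g)).val = m := by
    intro m hm; rw [Fin.val_natCast]; exact Nat.mod_eq_of_lt hm
  -- decode Fin equalities
  have hdec : ∀ m1 m2 : ℕ, m1 < g → m2 < g → (m1 : Fin g) = (m2 : Fin g) + 1 →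
      m1 = m2 + 1 ∨ (m2 + 1 = g ∧ m1 = 0) := by
    intro m1 m2 h1 h2 heq
    have hv := congrArg Fin.val heq
    rw [Fin.val_add, hone, vcast m1 h1, vcast m2 h2] at hv
    have hv2 : m1 = (m2 + 1) % g := hv
    rcases Nat.lt_or_ge (m2 + 1) g with h | h
    · rw [Nat.mod_eq_of_lt h] at hv2; exact Or.inl hv2
    · have hg' : m2 + 1 = g := by omega
      rw [hg', Nat.mod_self] at hv2
      exact Or.inr ⟨hg', hv2⟩
  -- uniqueness decode
  have huniq' : ∀ m : ℕ, m < g → Γ.G.Adj x (f (m : Fin g)) → m = 0 := by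
    intro m hm hadjm
    have := congrArg Fin.val (huniq _ hadjm)
    rwa [vcast m hm, hzerov] at this
  -- the pair system
  set a : Fin k → V := fun i => if i.val = 0 then x else f ((2 * i.val - 1 : ℕ) : Fin g) with ha
  set b : Fin k → V := fun i => if i.val = 0 then f 0 else f ((2 * i.val : ℕ) : Fin g) with hb
  have hblt : ∀ i : Fin k, i.val ≠ 0 → 2 * i.val < g := by
    intro i h; have := i.isLt; omega
  have halt : ∀ i : Fin k, i.val ≠ 0 → 2 * i.val - 1 < g := by
    intro i h; have := i.isLt; omega
  have hab : ∀ i, Γ.G.Adj (a i) (b i) := by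
    intro i
    by_cases hi : i.val = 0
    · simp only [ha, hb, if_pos hi]; exact hxadj
    · simp only [ha, hb, if_neg hi]
      have hlt := hblt i hi
      have heq : ((2 * i.val - 1 : ℕ) : Fin g) + 1 = ((2 * i.val : ℕ) : Fin g) := by
        apply Fin.ext
        rw [Fin.val_add, hone, vcast _ (halt i hi), vcast _ hlt]
        have h9 : (2 * i.val - 1 + 1) = 2 * i.val := by omega
        rw [h9, Nat.mod_eq_of_lt hlt]
      have := hadj ((2 * i.val - 1 : ℕ) : Fin g)
      rwa [heq] at this
  -- zero lemmas
  have Z1 : ∀ i j : Fin k, i ≠ j → A (a i) (a j) = 0 := by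
    intro i j hij
    apply Γ.adjMatrix_apply_of_not_adj
    intro hadj'
    by_cases hi : i.val = 0 <;> by_cases hj : j.val = 0
    · exact hij (Fin.ext (by omega))
    · -- x adjacent to f(2j-1)
      rw [ha] at hadj'
      simp only [if_pos hi, if_neg hj] at hadj'
      have := huniq' _ (halt j hj) hadj'
      omega
    · rw [ha] at hadj'
      simp only [if_neg hi, if_pos hj] at hadj'
      have := huniq' _ (halt i hi) hadj'.symm
      omega
    · rw [ha] at hadj'
      simp only [if_neg hi, if_neg hj] at hadj'
      rcases hchord _ _ hadj' with h | h
      · rcases hdec _ _ (halt j hj) (halt i hi) h with h' | ⟨h', h''⟩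
        · omega
        · have := i.isLt; omega
      · rcases hdec _ _ (halt i hi) (halt j hj) h with h' | ⟨h', h''⟩
        · omega
        · have := j.isLt; omega
  have Z2 : ∀ i j : Fin k, i ≠ j → i.val ≠ j.val + 1 → A (a i) (b j) = 0 := by
    intro i j hij hsucc
    apply Γ.adjMatrix_apply_of_not_adj
    intro hadj'
    by_cases hi : i.val = 0 <;> by_cases hj : j.val = 0
    · exact hij (Fin.ext (by omega))
    · -- x adjacent to f(2j)
      rw [ha, hb] at hadj'
      simp only [if_pos hi, if_neg hj] at hadj'
      have := huniq' _ (hblt j hj) hadj'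
      omega
    · -- f(2i-1) adjacent to f 0,  i.val ≥ 2 here since i.val ≠ j.val+1 = 1
      rw [ha, hb] at hadj'
      simp only [if_neg hi, if_pos hj] at hadj'
      have h0 : (0 : Fin g) = ((0 : ℕ) : Fin g) := by simp
      rw [h0] at hadj'
      rcases hchord _ _ hadj' with h | h
      · rcases hdec _ _ (by omega) (halt i hi) h with h' | ⟨h', h''⟩
        · omega
        · have := i.isLt; omega
      · rcases hdec _ _ (halt i hi) (by omega) h with h' | ⟨h', h''⟩
        · omega
        · omega
    · rw [ha, hb] at hadj'
      simp only [if_neg hi, if_neg hj] at hadj'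
      rcases hchord _ _ hadj' with h | h
      · rcases hdec _ _ (hblt j hj) (halt i hi) h with h' | ⟨h', h''⟩
        · omega
        · have := i.isLt; omega
      · rcases hdec _ _ (halt i hi) (hblt j hj) h with h' | ⟨h', h''⟩
        · omega
        · have hjlt := j.isLt; omega
  -- signs
  have hAdiag : ∀ u, A u u = 0 := fun u => Γ.adjMatrix_diag u
  have hAsymm : ∀ u v, A u v = A v u := Γ.adjMatrix_symm
  have hAabs : ∀ u v, |A u v| ≤ 1 := Γ.adjMatrix_abs_le_one
  have hσ : ∀ i, A (a i) (b i) = 1 ∨ A (a i) (b i) = -1 := fun i => Γ.adjMatrix_pm (hab i)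
  have hσsq : ∀ i, A (a i) (b i) * A (a i) (b i) = 1 := by
    intro i; rcases hσ i with h | h <;> rw [h] <;> norm_num
  have hσabs : ∀ i, |A (a i) (b i)| = 1 := by
    intro i; rcases hσ i with h | h <;> rw [h] <;> norm_num
  set M : Fin k → ℝ := fun i => ((k : ℝ) + 2) * 2 ^ (k - i.val) with hM
  have hMpos : ∀ i, 0 < M i := by
    intro i; rw [hM]; positivity
  set N : Fin k → ℝ := fun i => -(A (a i) (b i)) * M i with hN
  have hNabs : ∀ i, |N i| = M i := by
    intro i
    rw [hN]
    simp only
    rw [abs_mul, abs_neg, hσabs]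
    simp [abs_of_pos (hMpos i)]
  set w : Fin k → V → ℝ :=
    fun i v => N i * (if v = a i then 1 else 0) + (if v = b i then 1 else 0) with hwdef
  have hGform : ∀ i j, w i ⬝ᵥ A *ᵥ w j
      = N i * N j * A (a i) (a j) + N i * A (a i) (b j) + N j * A (b i) (a j) + A (b i) (b j) :=
    fun i j => pair_quad A (N i) (N j) (a i) (b i) (a j) (b j)
  have hGdiag : ∀ i, w i ⬝ᵥ A *ᵥ w i = -2 * M i := by
    intro i
    rw [hGform i i, hAdiag, hAdiag, hAsymm (b i) (a i)]
    simp only [hN]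
    linear_combination (-2 * M i) * hσsq i
  set B : Fin k → Fin k → ℝ :=
    fun i j => (if i.val = j.val + 1 then M i else 0) + (if j.val = i.val + 1 then M j else 0) + 1
    with hB
  have hGB : ∀ i j, i ≠ j → |w i ⬝ᵥ A *ᵥ w j| ≤ B i j := by
    intro i j hij
    rw [hGform i j, Z1 i j hij]
    have t2 : |N i * A (a i) (b j)| ≤ (if i.val = j.val + 1 then M i else 0) := by
      by_cases hc : i.val = j.val + 1
      · rw [if_pos hc, abs_mul, hNabs]
        calc M i * |A (a i) (b j)| ≤ M i * 1 :=
              mul_le_mul_of_nonneg_left (hAabs _ _) (le_of_lt (hMpos i))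
          _ = M i := mul_one _
      · rw [if_neg hc, Z2 i j hij hc]
        simp
    have t3 : |N j * A (b i) (a j)| ≤ (if j.val = i.val + 1 then M j else 0) := by
      by_cases hc : j.val = i.val + 1
      · rw [if_pos hc, abs_mul, hNabs]
        calc M j * |A (b i) (a j)| ≤ M j * 1 :=
              mul_le_mul_of_nonneg_left (hAabs _ _) (le_of_lt (hMpos j))
          _ = M j := mul_one _
      · rw [if_neg hc, hAsymm (b i) (a j), Z2 j i (Ne.symm hij) hc]
        simp
    have t4 : |A (b i) (b j)| ≤ 1 := hAabs _ _
    have hre : N i * N j * 0 + N i * A (a i) (b j) + N j * A (b i) (a j) + A (b i) (b j)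
        = (N i * A (a i) (b j) + N j * A (b i) (a j)) + A (b i) (b j) := by ring
    rw [hre, hB]
    calc |(N i * A (a i) (b j) + N j * A (b i) (a j)) + A (b i) (b j)|
        ≤ |N i * A (a i) (b j) + N j * A (b i) (a j)| + |A (b i) (b j)| := abs_add_le _ _
      _ ≤ (|N i * A (a i) (b j)| + |N j * A (b i) (a j)|) + |A (b i) (b j)| := by
          have := abs_add_le (N i * A (a i) (b j)) (N j * A (b i) (a j))
          linarith
      _ ≤ ((if i.val = j.val + 1 then M i else 0) + (if j.val = i.val + 1 then M j else 0)) + 1 := by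
          apply add_le_add (add_le_add t2 t3) t4
  have hBs : ∀ i j, B i j = B j i := by
    intro i j
    rw [hB]
    ring
  have hdom : ∀ i, (∑ j ∈ Finset.univ.erase i, B i j) < - (w i ⬝ᵥ A *ᵥ w i) := by
    intro i
    rw [hGdiag i]
    have hisplit : ∑ j ∈ Finset.univ.erase i, B i j
        = (∑ j ∈ Finset.univ.erase i, (if i.val = j.val + 1 then M i else 0))
          + (∑ j ∈ Finset.univ.erase i, (if j.val = i.val + 1 then M j else 0))
          + (∑ j ∈ Finset.univ.erase i, (1:ℝ)) := by
      rw [← Finset.sum_add_distrib, ← Finset.sum_add_distrib]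
    have hS0 : (∑ _j ∈ Finset.univ.erase i, (1:ℝ)) = (k - 1 : ℕ) := by
      rw [Finset.sum_const, Finset.card_erase_of_mem (Finset.mem_univ i)]
      simp
    have hS1 : (∑ j ∈ Finset.univ.erase i, (if i.val = j.val + 1 then M i else 0)) ≤ M i := by
      by_cases hi0 : i.val = 0
      · have : ∀ j ∈ Finset.univ.erase i, (if i.val = j.val + 1 then M i else 0) = 0 := by
          intro j _
          rw [if_neg (by omega)]
        rw [Finset.sum_congr rfl this]
        simp [le_of_lt (hMpos i)]
      · set jp : Fin k := ⟨i.val - 1, by omega⟩ with hjp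
        have : ∀ j ∈ Finset.univ.erase i, (if i.val = j.val + 1 then M i else 0)
            = (if j = jp then M i else 0) := by
          intro j _
          by_cases hc : j = jp
          · subst hc
            rw [if_pos (by rw [hjp]; simp; omega), if_pos rfl]
          · rw [if_neg (fun hcc => hc (Fin.ext (by rw [hjp]; simp; omega))), if_neg hc]
        rw [Finset.sum_congr rfl this, Finset.sum_ite_eq' (Finset.univ.erase i) jp (fun _ => M i)]
        by_cases hmem : jp ∈ Finset.univ.erase i
        · rw [if_pos hmem]
        · rw [if_neg hmem]
          exact le_of_lt (hMpos i)
    set C : ℝ := ((k : ℝ) + 2) * 2 ^ (k - (i.val + 1)) with hC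
    have hCpos : 0 < C := by rw [hC]; positivity
    have hS2 : (∑ j ∈ Finset.univ.erase i, (if j.val = i.val + 1 then M j else 0)) ≤ C := by
      by_cases hnext : i.val + 1 < k
      · set jn : Fin k := ⟨i.val + 1, hnext⟩ with hjn
        have hMC : M jn = C := by rw [hM, hC, hjn]
        have : ∀ j ∈ Finset.univ.erase i, (if j.val = i.val + 1 then M j else 0)
            = (if j = jn then C else 0) := by
          intro j _
          by_cases hc : j = jn
          · subst hc
            rw [if_pos (by rw [hjn]), if_pos rfl, ← hMC]
          · rw [if_neg (fun hcc => hc (Fin.ext (by rw [hjn]; exact hcc))), if_neg hc]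
        rw [Finset.sum_congr rfl this, Finset.sum_ite_eq' (Finset.univ.erase i) jn (fun _ => C)]
        by_cases hmem : jn ∈ Finset.univ.erase i
        · rw [if_pos hmem]
        · rw [if_neg hmem]
          exact le_of_lt hCpos
      · have : ∀ j ∈ Finset.univ.erase i, (if j.val = i.val + 1 then M j else 0) = 0 := by
          intro j _
          rw [if_neg (by have := j.isLt; omega)]
        rw [Finset.sum_congr rfl this]
        simp [le_of_lt hCpos]
    have hMiC : M i = 2 * C := by
      have hexp : k - i.val = (k - (i.val + 1)) + 1 := by have := i.isLt; omega
      rw [hM, hC]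
      simp only
      rw [hexp, pow_succ]
      ring
    have h2m : (1:ℝ) ≤ 2 ^ (k - (i.val + 1)) := one_le_pow₀ (by norm_num)
    have hkC : (k : ℝ) - 1 < C := by
      rw [hC]
      nlinarith [h2m]
    have hcast : ((k - 1 : ℕ) : ℝ) = (k : ℝ) - 1 := by
      have : 1 ≤ k := hk1
      push_cast [this]
      ring
    rw [hisplit, hS0, hcast]
    nlinarith [hS1, hS2, hMiC, hkC, hCpos]
  have hneg := negdef_of_dom k (fun i j => w i ⬝ᵥ A *ᵥ w j) B hGB hBs hdom
  have hwneg : ∀ c : Fin k → ℝ, c ≠ 0 →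
      (∑ i, c i • w i) ⬝ᵥ A *ᵥ (∑ i, c i • w i) < 0 := by
    intro c hc
    rw [quad_sum A w c]
    exact hneg c hc
  have hfinal := card_neg_eigen_ge A Γ.isHermitian k w hwneg
  exact hfinal

end SignedGraph


/-- a connected signed graph with `i₋(Γ) = ⌈g/2⌉ - 1` that is not a cycle
(i.e. not every vertex has degree 2) has `g ∈ {3, 4}` and `i₋(Γ) = 1`. -/
theorem girth_of_extremal_negInertia_not_cycle {V : Type*} [Fintype V] [DecidableEq V] (Γ : SignedGraph V)
    (hconn : Γ.G.Connected) (g : ℕ) (hg : Γ.G.egirth = g)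
    (h : Γ.negInertia = (g + 1) / 2 - 1)
    (hnc : ¬ ∀ v : V, (Γ.G.neighborSet v).ncard = 2) :
    (g = 3 ∨ g = 4) ∧ Γ.negInertia = 1 := by
  classical
  have hfin : ¬ Γ.G.IsAcyclic := by
    intro hac
    rw [← SimpleGraph.egirth_eq_top] at hac
    rw [hg] at hac
    exact (ENat.coe_ne_top g) hac
  obtain ⟨aa, w, hw, hwlen⟩ := SimpleGraph.exists_egirth_eq_length.mpr hfin
  have hlen : w.length = g := by
    rw [hg] at hwlen
    exact_mod_cast hwlen.symm
  have hg3 : 3 ≤ g := by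
    have := hw.three_le_length
    omega
  haveI : NeZero g := ⟨by omega⟩
  have hone : (1 : Fin g).val = 1 := by
    rw [Fin.val_one']; exact Nat.mod_eq_of_lt (by omega)
  obtain ⟨f, hf, hadjf⟩ := cycle_fn w hw hg3 hlen
  by_cases hcross : ∃ x, x ∉ Set.range f ∧ ∃ j, Γ.G.Adj x (f j)
  · obtain ⟨x, hx, j₀, hxj⟩ := hcross
    by_cases htwo : ∃ j₁, j₁ ≠ j₀ ∧ Γ.G.Adj x (f j₁)
    · obtain ⟨j₁, hne, hxj1⟩ := htwo
      have h4 := four_ge_of_two_nbrs hg rfl f hf hadjf hx (Ne.symm hne) hxj hxj1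
      refine ⟨by omega, ?_⟩
      rw [h]
      omega
    · push_neg at htwo
      set f' : Fin g → V := fun i => f (j₀ + i) with hf'
      have hf'inj : Function.Injective f' := fun p q hpq => add_left_cancel (hf hpq)
      have hadj' : ∀ i, Γ.G.Adj (f' i) (f' (i + 1)) := by
        intro i
        have := hadjf (j₀ + i)
        rwa [show j₀ + i + 1 = j₀ + (i + 1) from by ring] at this
      have hx' : x ∉ Set.range f' := by
        rintro ⟨p, hp⟩
        exact hx ⟨j₀ + p, hp⟩
      have hchord' : ∀ i j, Γ.G.Adj (f' i) (f' j) → j = i + 1 ∨ i = j + 1 :=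
        fun i j hadj2 => no_chord hg rfl hg3 f' hf'inj hadj' hadj2
      have hxadj' : Γ.G.Adj x (f' 0) := by
        have : f' 0 = f j₀ := by rw [hf']; simp
        rw [this]
        exact hxj
      have huniq' : ∀ p, Γ.G.Adj x (f' p) → p = 0 := by
        intro p hp
        by_contra hp0
        exact htwo (j₀ + p) (fun hEq => hp0 (by
          have := add_eq_left.mp hEq
          exact this)) hp
      have hge := Γ.unique_nbr_negInertia hg3 f' hf'inj hadj' hchord' x hx' hxadj' huniq'
      rw [h] at hge
      exact absurd hge (by omega)
  · push_neg at hcross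
    have hall : ∀ v : V, v ∈ Set.range f := by
      intro v
      by_contra hv
      obtain ⟨p⟩ := hconn.preconnected (f 0) v
      obtain ⟨d, _, hd1, hd2⟩ := p.exists_boundary_dart (Set.range f)
        (Set.mem_range_self 0) hv
      obtain ⟨j, hj⟩ := hd1
      exact hcross d.snd hd2 j (by rw [hj]; exact d.adj.symm)
    push_neg at hnc
    obtain ⟨v, hv2⟩ := hnc
    obtain ⟨i, rfl⟩ := hall v
    apply absurd _ hv2
    have hset : Γ.G.neighborSet (f i) = {f (i + 1), f (i - 1)} := by
      ext u
      simp only [SimpleGraph.mem_neighborSet, Set.mem_insert_iff, Set.mem_singleton_iff]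
      constructor
      · intro hu
        obtain ⟨j, rfl⟩ := hall u
        rcases no_chord hg rfl hg3 f hf hadjf hu with h' | h'
        · left; rw [h']
        · right
          rw [show i - 1 = j from by rw [h']; ring]
      · rintro (rfl | rfl)
        · exact hadjf i
        · have := hadjf (i - 1)
          rw [show i - 1 + 1 = i from by ring] at this
          exact this.symm
    rw [hset]
    rw [Set.ncard_pair]
    intro heq
    have h6 := hf heq
    have h7 : (1 : Fin g) + 1 = 0 := by
      have := congrArg (fun z => z - i + 1) h6
      simpa [sub_add_cancel, add_sub_cancel] using (by
        have h8 : i + 1 - i + 1 = (1 : Fin g) + 1 := by ring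
        have h9 : i - 1 - i + 1 = (0 : Fin g) := by ring
        rw [← h8, ← h9]
        exact this)
    have h10 := congrArg Fin.val h7
    rw [Fin.val_add, hone] at h10
    have h11 : (0 : Fin g).val = 0 := rfl
    rw [h11, Nat.mod_eq_of_lt (by omega)] at h10
    omega
end
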